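/- arXiv:2505.00760 — 6 statements merged into one kernel-verified Lean document; each statement's English description precedes it below -/
import Mathlib

section
/- If κ ∈ K_k (with 1 ≤ k ≤ n) and the entries are ordered κ_1 ≥ κ_2 ≥ ⋯ ≥ κ_n, then κ_1 > 0; more generally, κ_1 ≥ κ_2 ≥ ⋯ ≥ κ_k > 0. -/
open Finset

def esymmS (n k : ℕ) (κ : Fin n → ℝ) : ℝ :=
  ∑ s ∈ Finset.powersetCard k (Finset.univ : Finset (Fin n)), ∏ i ∈ s, κ i

/-- The `k`-th Gårding cone, via the (unnormalized) elementary symmetric polynomials. -/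
def GardingCone (n k : ℕ) : Set (Fin n → ℝ) :=
  {κ | ∀ j : ℕ, 1 ≤ j → j ≤ k → 0 < esymmS n j κ}

/-- Elementary symmetric function of `κ` restricted to a finset of indices. -/
def esymmF {n : ℕ} (κ : Fin n → ℝ) (s : Finset (Fin n)) (j : ℕ) : ℝ :=
  ∑ t ∈ s.powersetCard j, ∏ i ∈ t, κ i

lemma esymmF_zero {n : ℕ} (κ : Fin n → ℝ) (s : Finset (Fin n)) : esymmF κ s 0 = 1 := by
  simp [esymmF]

lemma esymmF_eq_zero_of_card_lt {n : ℕ} (κ : Fin n → ℝ) (s : Finset (Fin n)) {j : ℕ}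
    (h : s.card < j) : esymmF κ s j = 0 := by
  rw [esymmF, Finset.powersetCard_eq_empty.2 h, Finset.sum_empty]

lemma esymmF_insert {n : ℕ} (κ : Fin n → ℝ) {a : Fin n} {s : Finset (Fin n)} (ha : a ∉ s)
    (j : ℕ) : esymmF κ (insert a s) (j + 1) = esymmF κ s (j + 1) + κ a * esymmF κ s j := by
  rw [esymmF, Finset.powersetCard_succ_insert ha, Finset.sum_union, esymmF]
  · congr 1
    rw [Finset.sum_image, esymmF, Finset.mul_sum]
    · refine Finset.sum_congr rfl fun t ht => ?_
      have hat : a ∉ t := fun h => ha ((Finset.mem_powersetCard.1 ht).1 h)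
      rw [Finset.prod_insert hat]
    · intro t ht u hu h
      have hat : a ∉ t := fun h => ha ((Finset.mem_powersetCard.1 ht).1 h)
      have hau : a ∉ u := fun h => ha ((Finset.mem_powersetCard.1 hu).1 h)
      rw [← Finset.erase_insert hat, ← Finset.erase_insert hau, h]
  · rw [Finset.disjoint_left]
    intro t ht ht'
    rcases Finset.mem_image.1 ht' with ⟨u, _, rfl⟩
    exact ha ((Finset.mem_powersetCard.1 ht).1 (Finset.mem_insert_self a u))

/-- removing the minimal (nonpositive) entry keeps positivity of the lower esymms -/
lemma esymmF_erase_pos {n : ℕ} (κ : Fin n → ℝ) {a : Fin n} {s : Finset (Fin n)} (ha : a ∈ s)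
    (hκa : κ a ≤ 0) {k : ℕ} (hpos : ∀ j : ℕ, 1 ≤ j → j ≤ k → 0 < esymmF κ s j) :
    ∀ j : ℕ, j ≤ k → j ≤ (s.erase a).card → 0 < esymmF κ (s.erase a) j := by
  intro j
  induction j with
  | zero => intro _ _; simp [esymmF_zero]
  | succ m ih =>
    intro hm hcard
    have hrec := esymmF_insert κ (Finset.notMem_erase a s) m
    rw [Finset.insert_erase ha] at hrec
    have h1 : 0 < esymmF κ s (m + 1) := hpos _ (Nat.succ_le_succ (Nat.zero_le m)) hm
    have h2 : 0 < esymmF κ (s.erase a) m := ih (le_of_lt hm) (le_of_lt hcard)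
    have : esymmF κ (s.erase a) (m + 1) = esymmF κ s (m + 1) - κ a * esymmF κ (s.erase a) m := by
      linarith [hrec]
    rw [this]
    nlinarith

lemma exists_pos_subset {n : ℕ} (κ : Fin n → ℝ) (s : Finset (Fin n)) :
    ∀ k : ℕ, 1 ≤ k → k ≤ s.card → (∀ j : ℕ, 1 ≤ j → j ≤ k → 0 < esymmF κ s j) →
      ∃ t ⊆ s, t.card = k ∧ ∀ i ∈ t, 0 < κ i := by
  induction s using Finset.strongInduction with
  | _ s IH =>
    intro k hk1 hks hpos
    have hne : s.Nonempty := Finset.card_pos.1 (lt_of_lt_of_le hk1 hks)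
    obtain ⟨a, has, hmin⟩ := Finset.exists_min_image s κ hne
    by_cases hκa : 0 < κ a
    · obtain ⟨t, hts, htc⟩ := Finset.exists_subset_card_eq hks
      exact ⟨t, hts, htc, fun i hi => lt_of_lt_of_le hκa (hmin i (hts hi))⟩
    · push_neg at hκa
      have herase : ∀ j : ℕ, j ≤ k → j ≤ (s.erase a).card → 0 < esymmF κ (s.erase a) j :=
        esymmF_erase_pos κ has hκa hpos
      have hcard : (s.erase a).card = s.card - 1 := Finset.card_erase_of_mem has
      by_cases hk : k ≤ (s.erase a).card
      · obtain ⟨t, hts, htc, htp⟩ := IH (s.erase a) (Finset.erase_ssubset has) k hk1 hk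
          (fun j hj1 hjk => herase j hjk (le_trans hjk hk))
        exact ⟨t, hts.trans (Finset.erase_subset a s), htc, htp⟩
      · -- k = s.card, leads to contradiction: κ a > 0
        exfalso
        push_neg at hk
        have hkc : k = s.card := by omega
        have h1 : (s.erase a).card = k - 1 := by omega
        have hrec := esymmF_insert κ (Finset.notMem_erase a s) (k - 1)
        rw [Finset.insert_erase has] at hrec
        have hk1' : k - 1 + 1 = k := Nat.succ_pred_eq_of_pos hk1
        rw [hk1'] at hrec
        have hz : esymmF κ (s.erase a) k = 0 :=
          esymmF_eq_zero_of_card_lt κ _ (by omega)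
        have hp : 0 < esymmF κ (s.erase a) (k - 1) := herase (k - 1) (by omega) (by omega)
        have hks' : 0 < esymmF κ s k := hpos k hk1 le_rfl
        rw [hz, zero_add] at hrec
        nlinarith

/-- If `κ ∈ K_k` is ordered decreasingly, then its first `k` entries are positive. -/
theorem gardingCone_first_entries_pos (n k : ℕ) (hk1 : 1 ≤ k) (hkn : k ≤ n)
    (κ : Fin n → ℝ) (hκ : κ ∈ GardingCone n k)
    (hord : ∀ i j : Fin n, i ≤ j → κ j ≤ κ i) :
    ∀ i : Fin n, (i : ℕ) < k → 0 < κ i := by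
  have hcard : k ≤ (Finset.univ : Finset (Fin n)).card := by
    simpa using hkn
  have huniv : ∀ j : ℕ, 1 ≤ j → j ≤ k → 0 < esymmF κ Finset.univ j := by
    intro j h1 h2
    have := hκ j h1 h2
    simpa [esymmF, esymmS] using this
  obtain ⟨t, _, htc, htp⟩ := exists_pos_subset κ Finset.univ k hk1 hcard huniv
  intro i hi
  -- there must be an element of t that is ≥ i
  by_contra hcon
  push_neg at hcon
  have hall : ∀ j ∈ t, j < i := by
    intro j hj
    by_contra hji
    push_neg at hji
    have h1 := hord i j hji
    have h2 := htp j hj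
    linarith
  have hsub : t ⊆ Finset.Iio i := fun j hj => Finset.mem_Iio.2 (hall j hj)
  have hle := Finset.card_le_card hsub
  rw [htc, Fin.card_Iio] at hle
  omega
end

section
/- (Ren–Wang) Let 1 ≤ k ≤ n and let κ ∈ K_k with entries ordered κ_1 ≥ κ_2 ≥ ⋯ ≥ κ_n. Then for every index i with κ_i ≤ 0, one has κ_i > −((n−k)/k) · κ_1. -/
open Finset

section RenWangAux

open Multiset Polynomial

lemma mesymm_zero (S : Multiset ℝ) : S.esymm 0 = 1 := by
  simp [Multiset.esymm, Multiset.powersetCard_zero_left]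

lemma mesymm_one (S : Multiset ℝ) : S.esymm 1 = S.sum := by
  simp [Multiset.esymm, Multiset.powersetCard_one, Multiset.map_map, Function.comp]

lemma mesymm_eq_zero {S : Multiset ℝ} {j : ℕ} (h : Multiset.card S < j) : S.esymm j = 0 := by
  simp [Multiset.esymm, Multiset.powersetCard_eq_empty _ h]

lemma mesymm_cons (a : ℝ) (S : Multiset ℝ) (j : ℕ) :
    (a ::ₘ S).esymm (j + 1) = S.esymm (j + 1) + a * S.esymm j := by
  rw [Multiset.esymm, Multiset.powersetCard_cons, Multiset.map_add, Multiset.sum_add,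
    Multiset.map_map]
  congr 1
  have : ((S.powersetCard j).map (Multiset.prod ∘ Multiset.cons a)).sum
      = ((S.powersetCard j).map (fun t => a * t.prod)).sum := by
    congr 1
    exact Multiset.map_congr rfl (fun t _ => by simp)
  rw [this, Multiset.sum_map_mul_left]
  rfl

lemma mesymm_card (S : Multiset ℝ) : S.esymm (Multiset.card S) = S.prod := by
  induction S using Multiset.induction_on with
  | empty => simp [mesymm_zero]
  | cons a S ih =>
    rw [Multiset.card_cons, mesymm_cons, ih, mesymm_eq_zero (Nat.lt_succ_self _),
      Multiset.prod_cons, zero_add]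

/-- Removing a nonpositive entry preserves positivity of the symmetric functions. -/
lemma pos_removal {k : ℕ} {a : ℝ} {S : Multiset ℝ} (ha : a ≤ 0)
    (h : ∀ j, 1 ≤ j → j ≤ k → 0 < (a ::ₘ S).esymm j) :
    ∀ j, j ≤ k → 0 < S.esymm j := by
  intro j
  induction j with
  | zero => intro _; rw [mesymm_zero]; norm_num
  | succ j ih =>
    intro hj
    have h1 : 0 < S.esymm j := ih (by omega)
    have h2 := h (j + 1) (by omega) hj
    rw [mesymm_cons] at h2
    nlinarith

/-- Cauchy–Schwarz-like: `(card S)² ≤ (∑ x)(∑ 1/x)` for positive multisets. -/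
lemma card_sq_le_sum_mul_sum_inv : ∀ S : Multiset ℝ, (∀ x ∈ S, 0 < x) →
    ((Multiset.card S : ℝ)) ^ 2 ≤ S.sum * (S.map (·⁻¹)).sum := by
  intro S
  induction S using Multiset.induction_on with
  | empty => intro _; simp
  | cons a S ih =>
    intro hpos
    have ha : 0 < a := hpos a (Multiset.mem_cons_self _ _)
    have hS : ∀ x ∈ S, 0 < x := fun x hx => hpos x (Multiset.mem_cons_of_mem hx)
    have hsum : 0 ≤ S.sum := Multiset.sum_nonneg (fun x hx => (hS x hx).le)
    have hinv : 0 ≤ (S.map (·⁻¹)).sum := by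
      refine Multiset.sum_nonneg ?_
      intro x hx
      obtain ⟨y, hy, rfl⟩ := Multiset.mem_map.1 hx
      exact (inv_pos.2 (hS y hy)).le
    have hih := ih hS
    have hc : (0:ℝ) ≤ (Multiset.card S : ℝ) := by positivity
    rw [Multiset.card_cons, Multiset.sum_cons, Multiset.map_cons, Multiset.sum_cons]
    push_cast
    have huv : (a * (S.map (·⁻¹)).sum) * (a⁻¹ * S.sum) = S.sum * (S.map (·⁻¹)).sum := by
      field_simp
    have hu : 0 ≤ a * (S.map (·⁻¹)).sum := mul_nonneg ha.le hinv
    have hv : 0 ≤ a⁻¹ * S.sum := mul_nonneg (inv_pos.2 ha).le hsum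
    have key : 2 * (Multiset.card S : ℝ) ≤ a * (S.map (·⁻¹)).sum + a⁻¹ * S.sum := by
      nlinarith [sq_nonneg (a * (S.map (·⁻¹)).sum - a⁻¹ * S.sum), huv, hu, hv, hih, hc]
    have expand : (a + S.sum) * (a⁻¹ + (S.map (·⁻¹)).sum)
        = a * a⁻¹ + (a * (S.map (·⁻¹)).sum + a⁻¹ * S.sum) + S.sum * (S.map (·⁻¹)).sum := by ring
    rw [expand, mul_inv_cancel₀ (ne_of_gt ha)]
    nlinarith

/-- For a multiset of nonzero reals, `σ_{c}(a ::ₘ S) = prod * (sum of inverses)` where `c = card S`. -/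
lemma mesymm_pred_card : ∀ S : Multiset ℝ, (∀ x ∈ S, x ≠ 0) → ∀ a : ℝ, a ≠ 0 →
    (a ::ₘ S).esymm (Multiset.card S) = (a ::ₘ S).prod * ((a ::ₘ S).map (·⁻¹)).sum := by
  intro S
  induction S using Multiset.induction_on with
  | empty =>
    intro _ a ha
    simp [mesymm_zero, ha]
  | cons b S ih =>
    intro hne a ha
    have hb : b ≠ 0 := hne b (Multiset.mem_cons_self _ _)
    have hS : ∀ x ∈ S, x ≠ 0 := fun x hx => hne x (Multiset.mem_cons_of_mem hx)
    rw [Multiset.card_cons, mesymm_cons a (b ::ₘ S), ih hS b hb]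
    have h1 : (b ::ₘ S).esymm (Multiset.card S + 1) = (b ::ₘ S).prod := by
      rw [← Multiset.card_cons b S, mesymm_card]
    rw [h1]
    simp only [Multiset.prod_cons, Multiset.map_cons, Multiset.sum_cons]
    field_simp

/-- Differentiating `∏ (X - a)` : there is a multiset `T` of `m-1` reals with
`m * σ_j(T) = (m - j) * σ_j(S)`. -/
lemma exists_deriv_esymm (S : Multiset ℝ) (m : ℕ) (hS : Multiset.card S = m) (hm : 1 ≤ m) :
    ∃ T : Multiset ℝ, Multiset.card T = m - 1 ∧
      ∀ j, j ≤ m - 1 → (m : ℝ) * T.esymm j = ((m - j : ℕ) : ℝ) * S.esymm j := by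
  set p : ℝ[X] := (S.map fun a => X - C a).prod with hp
  have hfac : ∀ f ∈ S.map fun a => X - C a, f.Monic := by
    intro f hf
    obtain ⟨a, _, rfl⟩ := Multiset.mem_map.1 hf
    exact monic_X_sub_C a
  have hmonic : p.Monic := monic_multiset_prod_of_monic S _ (fun a _ => monic_X_sub_C a)
  have hdeg : p.natDegree = m := by
    rw [hp, natDegree_multiset_prod_of_monic _ hfac, Multiset.map_map]
    have h2 : (Multiset.map (natDegree ∘ fun a => (X:ℝ[X]) - C a) S) = S.map fun _ => 1 :=
      Multiset.map_congr rfl (fun a _ => natDegree_X_sub_C a)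
    rw [h2, Multiset.map_const', Multiset.sum_replicate, hS, smul_eq_mul, mul_one]
  have hroots : p.roots = S := roots_multiset_prod_X_sub_C S
  set q : ℝ[X] := derivative p with hq
  have hcard_le : Multiset.card q.roots ≤ m - 1 :=
    (card_roots' q).trans (by rw [hq]; exact (natDegree_derivative_le p).trans (by omega))
  have hcard_ge : m - 1 ≤ Multiset.card q.roots := by
    have h3 := p.card_roots_le_derivative
    rw [hroots, hS, ← hq] at h3
    omega
  have hcardq : Multiset.card q.roots = m - 1 := le_antisymm hcard_le hcard_ge
  have hdegq : q.natDegree = m - 1 := by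
    have h1 : q.natDegree ≤ m - 1 := by
      rw [hq]; exact (natDegree_derivative_le p).trans (by omega)
    have h2 : m - 1 ≤ q.natDegree := hcardq ▸ card_roots' q
    omega
  refine ⟨q.roots, hcardq, ?_⟩
  intro j hj
  have hpcm : p.coeff m = 1 := by rw [← hdeg]; exact hmonic.coeff_natDegree
  have hpc : p.coeff (m - j) = (-1 : ℝ) ^ j * S.esymm j := by
    have h4 := Polynomial.coeff_eq_esymm_roots_of_card
      (p := p) (by rw [hroots, hS, hdeg]) (k := m - j) (by omega)
    rw [hroots, hmonic.leadingCoeff, hdeg] at h4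
    have hmj : m - (m - j) = j := by omega
    rw [hmj] at h4
    rw [h4, one_mul]
  have h1 : m - 1 + 1 = m := by omega
  have hqc : q.coeff (m - 1 - j) = (-1 : ℝ) ^ j * ((m : ℝ) * q.roots.esymm j) := by
    have hlead : q.leadingCoeff = (m : ℝ) := by
      rw [Polynomial.leadingCoeff, hdegq, hq, Polynomial.coeff_derivative, h1, hpcm, one_mul]
      push_cast [Nat.cast_sub hm]
      ring
    have h4 := Polynomial.coeff_eq_esymm_roots_of_card
      (p := q) (by rw [hcardq, hdegq]) (k := m - 1 - j) (by omega)
    rw [hlead, hdegq] at h4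
    have hmj : m - 1 - (m - 1 - j) = j := by omega
    rw [hmj] at h4
    rw [h4]; ring
  have h5 : m - 1 - j + 1 = m - j := by omega
  have hqc2 : q.coeff (m - 1 - j) = p.coeff (m - j) * ((m - j : ℕ) : ℝ) := by
    rw [hq, Polynomial.coeff_derivative, h5]
    congr 1
    norm_cast
  rw [hpc, hqc] at hqc2
  have hne : ((-1 : ℝ) ^ j) ≠ 0 := pow_ne_zero _ (by norm_num)
  have key : (-1:ℝ)^j * ((m:ℝ) * q.roots.esymm j)
      = (-1:ℝ)^j * (((m-j:ℕ):ℝ) * S.esymm j) := by rw [hqc2]; ring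
  exact mul_left_cancel₀ hne key

/-- Maclaurin-type inequality on the Gårding cone:
`k·m·σ_k ≤ (m-k+1)·σ_1·σ_{k-1}`. -/
lemma key_maclaurin : ∀ m k : ℕ, 1 ≤ k → k ≤ m → ∀ S : Multiset ℝ, Multiset.card S = m →
    (∀ j, 1 ≤ j → j ≤ k → 0 < S.esymm j) →
    (k : ℝ) * m * S.esymm k ≤ ((m : ℝ) - k + 1) * S.esymm 1 * S.esymm (k - 1) := by
  intro m
  induction m with
  | zero => intro k hk1 hk0 _ _ _; omega
  | succ m ih =>
    intro k hk1 hkm S hcard hpos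
    by_cases hks : k = m + 1
    · -- base case : `card S = k`, all entries are positive
      subst hks
      have hallpos : ∀ x ∈ S, 0 < x := by
        intro x hx
        by_contra hxle
        push_neg at hxle
        obtain ⟨T, rfl⟩ := Multiset.exists_cons_of_mem hx
        have hTcard : Multiset.card T = m := by simpa using hcard
        have hTpos := pos_removal hxle hpos
        have hk := hpos (m+1) (by omega) le_rfl
        have e1 : (x ::ₘ T).esymm (m+1) = x * T.prod := by
          rw [mesymm_cons, mesymm_eq_zero (show Multiset.card T < m + 1 by omega), zero_add,
            ← hTcard, mesymm_card]
        rw [e1] at hk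
        have hTm : 0 < T.esymm m := hTpos m (by omega)
        have e2 : T.esymm m = T.prod := by rw [← hTcard, mesymm_card]
        rw [e2] at hTm
        nlinarith
      have hprod : 0 < S.prod := Multiset.prod_pos hallpos
      have hcs := card_sq_le_sum_mul_sum_inv S hallpos
      rw [hcard] at hcs
      obtain ⟨a, ha⟩ := Multiset.exists_mem_of_ne_zero
        (show S ≠ 0 by intro h; rw [h] at hcard; simp at hcard)
      obtain ⟨T, rfl⟩ := Multiset.exists_cons_of_mem ha
      have hTcard : Multiset.card T = m := by simpa using hcard
      have hpred := mesymm_pred_card T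
        (fun x hx => ne_of_gt (hallpos x (Multiset.mem_cons_of_mem hx))) a
        (ne_of_gt (hallpos a (Multiset.mem_cons_self _ _)))
      rw [hTcard] at hpred
      have hck : m + 1 - 1 = m := by omega
      rw [hck, ← hcard, mesymm_card, hcard, mesymm_one, hpred]
      push_cast at hcs ⊢
      nlinarith [mul_le_mul_of_nonneg_right hcs (le_of_lt hprod), hprod]
    · -- inductive step via the derivative
      have hkm' : k ≤ m := by omega
      obtain ⟨T, hTcard, rel⟩ := exists_deriv_esymm S (m+1) hcard (by omega)
      simp only [Nat.add_sub_cancel] at hTcard rel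
      have hTpos : ∀ j, 1 ≤ j → j ≤ k → 0 < T.esymm j := by
        intro j hj1 hjk
        have hrel := rel j (by omega)
        have hcj : (0:ℝ) < ((m + 1 - j : ℕ) : ℝ) := by
          have : 0 < m + 1 - j := by omega
          exact_mod_cast this
        have h0 : 0 < ((m+1 : ℕ) : ℝ) * T.esymm j := by
          rw [hrel]; exact mul_pos hcj (hpos j hj1 hjk)
        have hMp : (0:ℝ) < ((m+1 : ℕ) : ℝ) := by positivity
        nlinarith [h0, hMp]
      have IH := ih k hk1 hkm' T hTcard hTpos
      have rk : ((m:ℝ)+1) * T.esymm k = ((m:ℝ)+1 - k) * S.esymm k := by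
        have := rel k (by omega)
        push_cast [Nat.cast_sub (show k ≤ m+1 by omega)] at this
        linarith
      have r1 : ((m:ℝ)+1) * T.esymm 1 = (m:ℝ) * S.esymm 1 := by
        have := rel 1 (by omega)
        push_cast [Nat.cast_sub (show 1 ≤ m+1 by omega)] at this
        linarith
      have rk1 : ((m:ℝ)+1) * T.esymm (k-1) = ((m:ℝ)+1 - k + 1) * S.esymm (k-1) := by
        have := rel (k-1) (by omega)
        push_cast [Nat.cast_sub (show k-1 ≤ m+1 by omega), Nat.cast_sub hk1] at this
        linarith
      have hMpos : (0:ℝ) < (m:ℝ)+1 := by positivity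
      have hIH' := mul_le_mul_of_nonneg_left IH (le_of_lt (mul_pos hMpos hMpos))
      have eL : (((m:ℝ)+1)*((m:ℝ)+1)) * ((k:ℝ) * m * T.esymm k)
          = ((k:ℝ) * m * ((m:ℝ)+1)) * (((m:ℝ)+1) * T.esymm k) := by ring
      have eR : (((m:ℝ)+1)*((m:ℝ)+1)) * (((m:ℝ) - k + 1) * T.esymm 1 * T.esymm (k-1))
          = ((m:ℝ) - k + 1) * (((m:ℝ)+1) * T.esymm 1) * (((m:ℝ)+1) * T.esymm (k-1)) := by
        ring
      rw [eL, eR, rk, r1, rk1] at hIH'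
      have hapos : (0:ℝ) < (m:ℝ)+1 - k := by
        have : (k:ℝ) ≤ m := by exact_mod_cast hkm'
        linarith
      have hmpos : (0:ℝ) < (m:ℝ) := by
        have h9 : (1:ℝ) ≤ (m:ℝ) := by exact_mod_cast hkm'.trans' hk1
        linarith
      have hgoal : (((m:ℝ)+1-k) * (m:ℝ)) * ((k:ℝ) * ((m:ℝ)+1) * S.esymm k)
          ≤ (((m:ℝ)+1-k) * (m:ℝ)) * (((m:ℝ)+1 - k + 1) * S.esymm 1 * S.esymm (k-1)) := by
        nlinarith [hIH']
      have hfin := le_of_mul_le_mul_left hgoal (mul_pos hapos hmpos)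
      push_cast
      linarith [hfin]

end RenWangAux

/-- Ren–Wang: if `κ ∈ K_k` is ordered decreasingly and `κ_i ≤ 0`, then
`κ_i > −((n−k)/k)·κ_1` (where `κ_1` is the largest entry). -/
theorem renWang_lower_bound (n k : ℕ) (hn : 1 ≤ n) (hk1 : 1 ≤ k) (hkn : k ≤ n)
    (κ : Fin n → ℝ) (hκ : κ ∈ GardingCone n k)
    (hord : ∀ i j : Fin n, i ≤ j → κ j ≤ κ i)
    (i : Fin n) (hi : κ i ≤ 0) :
    -(((n : ℝ) - (k : ℝ)) / (k : ℝ)) * κ ⟨0, hn⟩ < κ i := by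
  classical
  set M := κ ⟨0, hn⟩ with hMdef
  -- translate the hypothesis to multiset esymm
  have hfull : ∀ j, 1 ≤ j → j ≤ k → 0 < ((Finset.univ : Finset (Fin n)).val.map κ).esymm j := by
    intro j h1 h2
    have h3 := hκ j h1 h2
    rwa [esymmS, ← Finset.esymm_map_val] at h3
  have hmem : κ i ∈ (Finset.univ : Finset (Fin n)).val.map κ :=
    Multiset.mem_map_of_mem _ (Finset.mem_univ i)
  set S := (((Finset.univ : Finset (Fin n)).val.map κ).erase (κ i)) with hSdef
  have hconsS : ((Finset.univ : Finset (Fin n)).val.map κ) = κ i ::ₘ S :=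
    (Multiset.cons_erase hmem).symm
  have hcardfull : Multiset.card ((Finset.univ : Finset (Fin n)).val.map κ) = n := by
    simp
  have hcardS : Multiset.card S = n - 1 := by
    rw [hSdef, Multiset.card_erase_of_mem hmem, hcardfull]
    rfl
  have hfull' : ∀ j, 1 ≤ j → j ≤ k → 0 < (κ i ::ₘ S).esymm j := by
    intro j h1 h2; rw [← hconsS]; exact hfull j h1 h2
  have hSpos : ∀ j, j ≤ k → 0 < S.esymm j := pos_removal hi hfull'
  -- k < n
  have hklt : k < n := by
    rcases lt_or_eq_of_le hkn with h | h
    · exact h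
    · exfalso
      subst h
      have h4 := hfull' k hk1 le_rfl
      have hk' : k - 1 + 1 = k := by omega
      rw [← hk', mesymm_cons, hk'] at h4
      have h5 : S.esymm k = 0 := mesymm_eq_zero (by omega)
      have h6 : 0 < S.esymm (k - 1) := hSpos (k - 1) (by omega)
      nlinarith
  have hn2 : 2 ≤ n := by omega
  -- every element of S is at most M
  have hle : ∀ x ∈ S, x ≤ M := by
    intro x hx
    have hx' : x ∈ ((Finset.univ : Finset (Fin n)).val.map κ) := Multiset.mem_of_mem_erase hx
    obtain ⟨j, _, rfl⟩ := Multiset.mem_map.1 hx'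
    exact hord ⟨0, hn⟩ j (by simp [Fin.le_def])
  have hsum : S.sum ≤ ((n - 1 : ℕ) : ℝ) * M := by
    have := Multiset.sum_le_card_nsmul S M hle
    rwa [hcardS, nsmul_eq_mul] at this
  have hsum' : S.sum ≤ ((n : ℝ) - 1) * M := by
    rwa [Nat.cast_sub hn, Nat.cast_one] at hsum
  -- M is positive
  have hn1R : (1:ℝ) ≤ (n:ℝ) - 1 := by
    have : (2:ℝ) ≤ (n:ℝ) := by exact_mod_cast hn2
    linarith
  have hM : 0 < M := by
    have h1 := hfull' 1 le_rfl hk1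
    rw [mesymm_one, Multiset.sum_cons] at h1
    nlinarith [hsum', hi, hn1R, h1]
  -- key Maclaurin inequality for S
  have hkey := key_maclaurin (n - 1) k hk1 (by omega) S hcardS
    (fun j h1 h2 => hSpos j h2)
  rw [mesymm_one] at hkey
  rw [Nat.cast_sub hn, Nat.cast_one] at hkey
  have hSk1 : 0 < S.esymm (k - 1) := hSpos (k - 1) (by omega)
  have hnk : (0:ℝ) ≤ (n:ℝ) - k := by
    have : (k:ℝ) ≤ (n:ℝ) := by exact_mod_cast hkn
    linarith
  -- bound : k * σ_k(S) ≤ (n - k) * M * σ_{k-1}(S)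
  have hbound : (k:ℝ) * S.esymm k ≤ ((n:ℝ) - k) * M * S.esymm (k - 1) := by
    have h7 : ((n:ℝ) - 1 - k + 1) * S.sum * S.esymm (k-1)
        ≤ ((n:ℝ) - k) * (((n:ℝ) - 1) * M) * S.esymm (k-1) := by
      have h8 : ((n:ℝ) - 1 - k + 1) = (n:ℝ) - k := by ring
      rw [h8]
      have h9 : ((n:ℝ) - k) * S.sum ≤ ((n:ℝ) - k) * (((n:ℝ) - 1) * M) :=
        mul_le_mul_of_nonneg_left hsum' hnk
      exact mul_le_mul_of_nonneg_right h9 hSk1.le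
    have h10 : (k:ℝ) * ((n:ℝ) - 1) * S.esymm k
        ≤ ((n:ℝ) - k) * (((n:ℝ) - 1) * M) * S.esymm (k-1) := le_trans hkey h7
    have h11 : (0:ℝ) < (n:ℝ) - 1 := by linarith
    have h12 : ((n:ℝ) - 1) * ((k:ℝ) * S.esymm k)
        ≤ ((n:ℝ) - 1) * (((n:ℝ) - k) * M * S.esymm (k - 1)) := by
      nlinarith [h10]
    exact le_of_mul_le_mul_left h12 h11
  -- the defining positivity at level k
  have hlevk := hfull' k hk1 le_rfl
  have hk' : k - 1 + 1 = k := by omega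
  rw [← hk', mesymm_cons, hk'] at hlevk
  -- conclude
  have hk0R : (0:ℝ) < (k:ℝ) := by exact_mod_cast hk1
  rw [neg_mul, neg_lt]
  rw [div_mul_eq_mul_div, lt_div_iff₀ hk0R]
  -- goal : -κ i * k < (n - k) * M
  have h13 : (-κ i * (k:ℝ)) * S.esymm (k-1) < (((n:ℝ) - k) * M) * S.esymm (k-1) := by
    nlinarith [hlevk, hbound, hSk1, hk0R]
  exact (mul_lt_mul_iff_left₀ hSk1).mp h13
end

section
/- For 1 ≤ k ≤ n and κ ∈ K_k, the first derivatives of S_k are positive: S_{k-1}(κ|i) > 0 for every index i. -/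
open Finset

namespace EsymmAux

variable {n : ℕ}

/-- Restricted elementary symmetric sum over subsets of `S`. -/
def sE (S : Finset (Fin n)) (j : ℕ) (v : Fin n → ℝ) : ℝ :=
  ∑ A ∈ powersetCard j S, ∏ a ∈ A, v a

lemma esymmS_eq (j : ℕ) (v : Fin n → ℝ) : esymmS n j v = sE univ j v := rfl

@[simp] lemma sE_zero (S : Finset (Fin n)) (v : Fin n → ℝ) : sE S 0 v = 1 := by
  simp [sE]

lemma Zg {S : Finset (Fin n)} {i : Fin n} (hi : i ∈ S) (m : ℕ) (v : Fin n → ℝ) :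
    sE S m (Function.update v i 0) = sE (S.erase i) m v := by
  classical
  rw [sE, ← Finset.sum_filter_add_sum_filter_not _ (fun A => i ∈ A)]
  have h1 : ∑ A ∈ (powersetCard m S).filter (fun A => i ∈ A),
      ∏ a ∈ A, Function.update v i 0 a = 0 := by
    refine Finset.sum_eq_zero fun A hA => ?_
    exact Finset.prod_eq_zero (Finset.mem_filter.1 hA).2 (Function.update_self i 0 v)
  have h2 : (powersetCard m S).filter (fun A => i ∉ A) = powersetCard m (S.erase i) := by
    ext A
    simp only [mem_filter, mem_powersetCard, subset_erase]
    tauto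
  rw [h1, zero_add, h2, sE]
  refine Finset.sum_congr rfl fun A hA => Finset.prod_congr rfl fun a ha => ?_
  have hne : a ≠ i := by
    rw [mem_powersetCard] at hA
    rintro rfl
    exact (notMem_erase a S) (hA.1 ha)
  exact Function.update_of_ne hne 0 v

lemma I1 {S : Finset (Fin n)} {i : Fin n} (hi : i ∈ S) (j : ℕ) (v : Fin n → ℝ) :
    sE S (j+1) v = v i * sE (S.erase i) j v + sE (S.erase i) (j+1) v := by
  classical
  conv_lhs => rw [sE, ← Finset.insert_erase hi]
  rw [Finset.powersetCard_succ_insert (notMem_erase i S), Finset.sum_union (by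
    rw [Finset.disjoint_right]
    intro A hA hA'
    rw [Finset.mem_image] at hA
    obtain ⟨B, hB, rfl⟩ := hA
    rw [mem_powersetCard] at hA'
    exact (notMem_erase i S) (hA'.1 (mem_insert_self i B)))]
  rw [Finset.sum_image (by
    intro A hA B hB h
    rw [Finset.mem_coe, mem_powersetCard] at hA hB
    have hiA : i ∉ A := fun h' => notMem_erase i S (hA.1 h')
    have hiB : i ∉ B := fun h' => notMem_erase i S (hB.1 h')
    have : (insert i A).erase i = (insert i B).erase i := by rw [h]
    rwa [Finset.erase_insert hiA, Finset.erase_insert hiB] at this)]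
  have : ∑ A ∈ powersetCard j (S.erase i), ∏ a ∈ insert i A, v a
      = v i * sE (S.erase i) j v := by
    rw [sE, Finset.mul_sum]
    refine Finset.sum_congr rfl fun A hA => ?_
    rw [mem_powersetCard] at hA
    exact Finset.prod_insert (fun h => notMem_erase i S (hA.1 h))
  rw [this, add_comm]
  rfl

variable {n : ℕ}

lemma Mswap (S : Finset (Fin n)) (j : ℕ) (G : Fin n → Finset (Fin n) → ℝ) :
    ∑ B ∈ powersetCard (j+1) S, ∑ a ∈ B, G a (B.erase a)
      = ∑ A ∈ powersetCard j S, ∑ a ∈ S \ A, G a A := by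
  classical
  rw [Finset.sum_sigma', Finset.sum_sigma']
  refine Finset.sum_bij' (fun p hp => ⟨p.1.erase p.2, p.2⟩)
    (fun p hp => ⟨insert p.2 p.1, p.2⟩) ?_ ?_ ?_ ?_ ?_
  · rintro ⟨B, a⟩ hp
    rw [Finset.mem_sigma, mem_powersetCard] at hp
    obtain ⟨⟨hBS, hBc⟩, ha⟩ := hp
    rw [Finset.mem_sigma, mem_powersetCard]
    refine ⟨⟨(Finset.erase_subset _ _).trans hBS, ?_⟩, ?_⟩
    · rw [Finset.card_erase_of_mem ha, hBc]; rfl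
    · rw [Finset.mem_sdiff]
      exact ⟨hBS ha, notMem_erase _ _⟩
  · rintro ⟨A, a⟩ hp
    rw [Finset.mem_sigma, mem_powersetCard, Finset.mem_sdiff] at hp
    obtain ⟨⟨hAS, hAc⟩, haS, haA⟩ := hp
    rw [Finset.mem_sigma, mem_powersetCard]
    exact ⟨⟨Finset.insert_subset haS hAS, by rw [Finset.card_insert_of_notMem haA, hAc]⟩,
      mem_insert_self _ _⟩
  · rintro ⟨B, a⟩ hp
    rw [Finset.mem_sigma] at hp
    simp only [Finset.insert_erase hp.2]
  · rintro ⟨A, a⟩ hp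
    rw [Finset.mem_sigma, Finset.mem_sdiff] at hp
    simp only [Finset.erase_insert hp.2.2]
  · rintro ⟨B, a⟩ hp
    rfl

lemma I2 (S : Finset (Fin n)) (j : ℕ) (v : Fin n → ℝ) :
    ((j+1 : ℕ) : ℝ) * sE S (j+1) v = ∑ a ∈ S, v a * sE (S.erase a) j v := by
  classical
  have h := Mswap S j (fun a A => v a * ∏ x ∈ A, v x)
  have hL : ∑ B ∈ powersetCard (j+1) S, ∑ a ∈ B, v a * ∏ x ∈ B.erase a, v x
      = ((j+1 : ℕ) : ℝ) * sE S (j+1) v := by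
    rw [sE, Finset.mul_sum]
    refine Finset.sum_congr rfl fun B hB => ?_
    rw [mem_powersetCard] at hB
    calc ∑ a ∈ B, v a * ∏ x ∈ B.erase a, v x
        = ∑ a ∈ B, ∏ x ∈ B, v x := by
          refine Finset.sum_congr rfl fun a ha => Finset.mul_prod_erase B v ha
      _ = ((j+1 : ℕ) : ℝ) * ∏ x ∈ B, v x := by
          rw [Finset.sum_const, hB.2, nsmul_eq_mul]
  have hR : ∑ a ∈ S, v a * sE (S.erase a) j v
      = ∑ A ∈ powersetCard j S, ∑ a ∈ S \ A, v a * ∏ x ∈ A, v x := by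
    simp only [sE, Finset.mul_sum]
    refine Finset.sum_comm' ?_
    intro a A
    rw [mem_powersetCard, mem_powersetCard, Finset.mem_sdiff, subset_erase]
    tauto
  rw [← hL, h, ← hR]

lemma hasDerivAt_shift (S : Finset (Fin n)) (j : ℕ) (v : Fin n → ℝ) (t : ℝ) :
    HasDerivAt (fun s => ∑ A ∈ powersetCard (j+1) S, ∏ a ∈ A, (v a + s))
      ((S.card - j : ℕ) * ∑ A ∈ powersetCard j S, ∏ a ∈ A, (v a + t)) t := by
  classical
  have hA : ∀ A ∈ powersetCard (j+1) S, HasDerivAt (fun s => ∏ a ∈ A, (v a + s))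
      (∑ a ∈ A, ∏ x ∈ A.erase a, (v x + t)) t := by
    intro A _
    have := HasDerivAt.fun_finsetProd (u := A) (f := fun a s => v a + s)
      (f' := fun _ => (1:ℝ)) (x := t) (fun a _ => (hasDerivAt_id t).const_add (v a))
    simpa using this
  have hsum := HasDerivAt.fun_sum hA
  have hval : ∑ A ∈ powersetCard (j+1) S, ∑ a ∈ A, ∏ x ∈ A.erase a, (v x + t)
      = (S.card - j : ℕ) * ∑ A ∈ powersetCard j S, ∏ a ∈ A, (v a + t) := by
    rw [Mswap S j (fun a A => ∏ x ∈ A, (v x + t)), Finset.mul_sum]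
    refine Finset.sum_congr rfl fun A hA => ?_
    rw [mem_powersetCard] at hA
    rw [Finset.sum_const, Finset.card_sdiff_of_subset hA.1, hA.2, nsmul_eq_mul]
  rwa [hval] at hsum

lemma continuous_shift (S : Finset (Fin n)) (j : ℕ) (v : Fin n → ℝ) :
    Continuous (fun s => ∑ A ∈ powersetCard j S, ∏ a ∈ A, (v a + s)) := by
  refine continuous_finset_sum _ fun A _ => continuous_finset_prod _ fun a _ => ?_
  exact continuous_const.add continuous_id

lemma shift_pos (S : Finset (Fin n)) (v : Fin n → ℝ) :
    ∀ j, j ≤ S.card → (∀ b, 1 ≤ b → b < j → 0 < sE S b v) → 0 ≤ sE S j v →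
    ∀ t : ℝ, 0 < t → 0 < ∑ A ∈ powersetCard j S, ∏ a ∈ A, (v a + t) := by
  intro j
  induction j with
  | zero => intro _ _ _ t ht; simp
  | succ j IH =>
    intro hcard h1 h2 t ht
    have hmono : StrictMonoOn (fun s => ∑ A ∈ powersetCard (j+1) S, ∏ a ∈ A, (v a + s))
        (Set.Ici (0:ℝ)) := by
      refine strictMonoOn_of_deriv_pos (convex_Ici 0)
        ((continuous_shift S (j+1) v).continuousOn) ?_
      intro x hx
      rw [interior_Ici] at hx
      rw [(hasDerivAt_shift S j v x).deriv]
      have hgx : 0 < ∑ A ∈ powersetCard j S, ∏ a ∈ A, (v a + x) := by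
        refine IH (by omega) (fun b hb1 hbj => h1 b hb1 (by omega)) ?_ x hx
        rcases Nat.eq_zero_or_pos j with rfl | hj
        · simp
        · exact (h1 j hj (by omega)).le
      have hc : (0:ℝ) < (S.card - j : ℕ) := by
        have : j < S.card := by omega
        exact_mod_cast Nat.sub_pos_of_lt this
      positivity
    have h00 : (fun s => ∑ A ∈ powersetCard (j+1) S, ∏ a ∈ A, (v a + s)) 0 = sE S (j+1) v := by
      simp [sE]
    have := hmono (Set.self_mem_Ici) (Set.mem_Ici.2 ht.le) ht
    rw [h00] at this
    linarith

lemma critical {v : Fin n → ℝ} {i : Fin n} (m : ℕ)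
    (h0 : sE ((univ : Finset (Fin n)).erase i) (m+1) v = 0)
    (h2 : ∀ j ∈ (univ : Finset (Fin n)).erase i,
      0 ≤ sE (((univ : Finset (Fin n)).erase i).erase j) m v) :
    sE univ (m+2) v ≤ 0 := by
  set S := (univ : Finset (Fin n)).erase i with hS
  have hI1 := I1 (mem_univ i) (m+1) v
  rw [show ((univ : Finset (Fin n))).erase i = S from rfl] at hI1
  rw [show (m+1)+1 = m+2 from rfl] at hI1
  rw [hI1, h0, mul_zero, zero_add]
  have hI2 := I2 S (m+1) v
  have key : ∀ a ∈ S, v a * sE (S.erase a) (m+1) v = -(v a ^ 2 * sE (S.erase a) m v) := by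
    intro a ha
    have h := I1 ha m v
    rw [h0] at h
    have : sE (S.erase a) (m+1) v = -(v a * sE (S.erase a) m v) := by linarith
    rw [this]; ring
  rw [Finset.sum_congr rfl key] at hI2
  have hsum : ∑ a ∈ S, -(v a ^ 2 * sE (S.erase a) m v) ≤ 0 := by
    refine Finset.sum_nonpos fun a ha => ?_
    have := h2 a ha
    nlinarith [sq_nonneg (v a)]
  have hpos : (0:ℝ) < ((m+2 : ℕ) : ℝ) := by positivity
  nlinarith [hI2, hsum]
theorem aux (n : ℕ) : ∀ k : ℕ, 1 ≤ k → k ≤ n →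
    (∀ κ : Fin n → ℝ, (∀ b, 1 ≤ b → b < k → 0 < esymmS n b κ) → 0 ≤ esymmS n k κ →
      ∀ i, 0 ≤ sE ((univ : Finset (Fin n)).erase i) (k-1) κ) ∧
    (∀ κ : Fin n → ℝ, (∀ b, 1 ≤ b → b ≤ k → 0 < esymmS n b κ) →
      ∀ i, 0 < sE ((univ : Finset (Fin n)).erase i) (k-1) κ) := by
  intro k
  induction k using Nat.strong_induction_on with
  | _ k IH =>
  intro hk1 hkn
  rcases Nat.lt_or_ge k 2 with hk2 | hk2
  · obtain rfl : k = 1 := by omega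
    constructor
    · intro κ _ _ i; simp
    · intro κ _ i; simp
  · obtain ⟨m, rfl⟩ : ∃ m, k = m + 2 := ⟨k - 2, by omega⟩
    have hm1 : (m + 2) - 1 = m + 1 := rfl
    -- core contradiction lemma
    have core : ∀ κ' : Fin n → ℝ, (∀ j, 1 ≤ j → j ≤ m+2 → 0 < esymmS n j κ') →
        ∀ i, sE ((univ : Finset (Fin n)).erase i) (m+1) κ' ≠ 0 := by
      intro κ' hpos i h0
      have hc : ∀ b, 1 ≤ b → b ≤ m → 0 < sE ((univ : Finset (Fin n)).erase i) b κ' := by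
        intro b hb1 hbm
        have := (IH (b+1) (by omega) (by omega) (by omega)).2 κ'
          (fun j hj1 hj2 => hpos j hj1 (by omega)) i
        simpa using this
      have hW := (IH (m+1) (by omega) (by omega) (by omega)).1 (Function.update κ' i 0)
        (by
          intro b hb1 hbk
          rw [esymmS_eq, Zg (mem_univ i)]
          exact hc b hb1 (by omega))
        (by rw [esymmS_eq, Zg (mem_univ i)]; rw [h0])
      have hd : ∀ j ∈ (univ : Finset (Fin n)).erase i,
          0 ≤ sE (((univ : Finset (Fin n)).erase i).erase j) m κ' := by
        intro j hj
        have hji : i ∈ (univ : Finset (Fin n)).erase j := by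
          rw [Finset.mem_erase]
          exact ⟨fun h => (Finset.mem_erase.1 hj).1 h.symm, mem_univ i⟩
        have h := hW j
        rw [show (m+1)-1 = m from rfl, Zg hji m κ', Finset.erase_right_comm] at h
        exact h
      have hcr := critical m h0 hd
      have hp := hpos (m+2) (by omega) le_rfl
      rw [esymmS_eq] at hp
      linarith
    have Wp : ∀ κ : Fin n → ℝ,
        (∀ b, 1 ≤ b → b < m+2 → 0 < esymmS n b κ) → 0 ≤ esymmS n (m+2) κ →
        ∀ i, 0 ≤ sE ((univ : Finset (Fin n)).erase i) (m+1) κ := by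
      intro κ hb hk i
      by_contra hneg
      push_neg at hneg
      set g : ℝ → ℝ := fun t =>
        ∑ A ∈ powersetCard (m+1) ((univ : Finset (Fin n)).erase i), ∏ a ∈ A, (κ a + t)
        with hg
      have hg0 : g 0 = sE ((univ : Finset (Fin n)).erase i) (m+1) κ := by
        simp [hg, sE]
      set T : ℝ := 1 + ∑ l, |κ l| with hT
      have hTl : ∀ l, 0 < κ l + T := by
        intro l
        have h1 : |κ l| ≤ ∑ l', |κ l'| :=
          Finset.single_le_sum (f := fun l => |κ l|) (fun _ _ => abs_nonneg _) (mem_univ l)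
        have h2 : -κ l ≤ |κ l| := neg_le_abs _
        rw [hT]; linarith
      have hcardE : m + 1 ≤ ((univ : Finset (Fin n)).erase i).card := by
        rw [Finset.card_erase_of_mem (mem_univ i), Finset.card_univ, Fintype.card_fin]
        omega
      have hgT : 0 < g T := by
        rw [hg]
        refine Finset.sum_pos (fun A hA => Finset.prod_pos fun a _ => hTl a) ?_
        exact Finset.powersetCard_nonempty.2 hcardE
      have h0T : (0:ℝ) ≤ T := by
        have : (0:ℝ) ≤ ∑ l, |κ l| := Finset.sum_nonneg fun l _ => abs_nonneg _
        rw [hT]; linarith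
      have hivt := intermediate_value_Ioo h0T ((continuous_shift _ _ _).continuousOn)
        (show (0:ℝ) ∈ Set.Ioo (g 0) (g T) from ⟨by rw [hg0]; exact hneg, hgT⟩)
      obtain ⟨t, htI, hgt⟩ := hivt
      have ht0 : 0 < t := htI.1
      have hks : ∀ j, 1 ≤ j → j ≤ m+2 → 0 < esymmS n j (fun l => κ l + t) := by
        intro j hj1 hj2
        rw [esymmS_eq]
        have hcu : j ≤ (univ : Finset (Fin n)).card := by
          rw [Finset.card_univ, Fintype.card_fin]; omega
        have h1 : ∀ b, 1 ≤ b → b < j → 0 < sE (univ : Finset (Fin n)) b κ := by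
          intro b hb1 hbj
          rw [← esymmS_eq]
          exact hb b hb1 (by omega)
        have h2 : 0 ≤ sE (univ : Finset (Fin n)) j κ := by
          rw [← esymmS_eq]
          rcases Nat.lt_or_ge j (m+2) with h | h
          · exact (hb j hj1 h).le
          · have : j = m + 2 := by omega
            rw [this]; exact hk
        exact shift_pos univ κ j hcu h1 h2 t ht0
      exact core (fun l => κ l + t) hks i hgt
    refine ⟨by rw [hm1]; exact Wp, ?_⟩
    intro κ hb i
    rw [hm1]
    have hge := Wp κ (fun b h1 h2 => hb b h1 (by omega)) (hb (m+2) (by omega) le_rfl).le i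
    rcases lt_or_eq_of_le hge with h | h
    · exact h
    · exact absurd h.symm (core κ hb i)

end EsymmAux

/-- For `κ ∈ K_k`, the first derivatives of `S_k` are positive: `S_{k-1}(κ|i) > 0`. -/
theorem esymm_deriv_pos (n k : ℕ) (hk1 : 1 ≤ k) (hkn : k ≤ n)
    (κ : Fin n → ℝ) (hκ : κ ∈ GardingCone n k) (i : Fin n) :
    0 < esymmS n (k - 1) (Function.update κ i 0) := by
  have h := (EsymmAux.aux n k hk1 hkn).2 κ hκ i
  rw [EsymmAux.esymmS_eq, EsymmAux.Zg (Finset.mem_univ i)]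
  exact h
end

section
/- For 1 ≤ k ≤ n and κ ∈ K_k, the truncated vector property holds: for each index i, the vector κ with its i-th coordinate removed (viewed in ℝ^{n−1}) lies in the (k−1)-th Gårding cone of ℝ^{n−1}, i.e., S_j(κ|i) > 0 for all 1 ≤ j ≤ k−1. -/
open Finset Polynomial

lemma card_supersets {α : Type*} [DecidableEq α] (u B : Finset α) (j : ℕ)
    (hB : B ⊆ u) (hm : B.card ≤ j) :
    ((powersetCard j u).filter (fun A => B ⊆ A)).card = (u.card - B.card).choose (j - B.card) := by
  have hcs : (u \ B).card = u.card - B.card := Finset.card_sdiff_of_subset hB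
  rw [← hcs, ← Finset.card_powersetCard (j - B.card) (u \ B)]
  apply Finset.card_bij' (fun A _ => A \ B) (fun C _ => B ∪ C)
  · intro A hA
    rw [Finset.mem_filter, Finset.mem_powersetCard] at hA
    rw [Finset.mem_powersetCard]
    exact ⟨Finset.sdiff_subset_sdiff hA.1.1 (Finset.Subset.refl B),
      by rw [Finset.card_sdiff_of_subset hA.2, hA.1.2]⟩
  · intro C hC
    rw [Finset.mem_powersetCard] at hC
    have hdisj : Disjoint B C := Finset.disjoint_of_subset_right hC.1 Finset.sdiff_disjoint.symm
    rw [Finset.mem_filter, Finset.mem_powersetCard]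
    refine ⟨⟨Finset.union_subset hB (hC.1.trans (Finset.sdiff_subset)), ?_⟩,
      Finset.subset_union_left⟩
    rw [Finset.card_union_of_disjoint hdisj, hC.2]
    omega
  · intro A hA
    rw [Finset.mem_filter] at hA
    exact Finset.union_sdiff_of_subset hA.2
  · intro C hC
    rw [Finset.mem_powersetCard] at hC
    have hdisj : Disjoint B C := Finset.disjoint_of_subset_right hC.1 Finset.sdiff_disjoint.symm
    exact Finset.union_sdiff_cancel_left hdisj

lemma esymmS_shift_expand {α : Type*} [DecidableEq α] (u : Finset α) (j : ℕ) (hj : j ≤ u.card)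
    (κ : α → ℝ) (t : ℝ) :
    ∑ A ∈ powersetCard j u, ∏ l ∈ A, (κ l + t)
      = ∑ m ∈ Finset.range (j+1), (((u.card - m).choose (j - m) : ℝ) * t^(j-m) *
          ∑ B ∈ powersetCard m u, ∏ l ∈ B, κ l) := by
  classical
  set g : Finset α → ℝ := fun B => (∏ l ∈ B, κ l) * t^(j - B.card) with hg
  have step1 : ∑ A ∈ powersetCard j u, ∏ l ∈ A, (κ l + t)
      = ∑ A ∈ powersetCard j u, ∑ B ∈ u.powerset, (if B ⊆ A then g B else 0) := by
    apply Finset.sum_congr rfl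
    intro A hA
    rw [Finset.mem_powersetCard] at hA
    rw [Finset.prod_add]
    have hAp : A.powerset = u.powerset.filter (fun B => B ⊆ A) := by
      ext B
      simp only [Finset.mem_powerset, Finset.mem_filter]
      exact ⟨fun h => ⟨h.trans hA.1, h⟩, fun h => h.2⟩
    rw [← Finset.sum_filter, ← hAp]
    apply Finset.sum_congr rfl
    intro B hB
    rw [Finset.mem_powerset] at hB
    rw [hg]
    simp only [Finset.prod_const]
    rw [Finset.card_sdiff_of_subset hB, hA.2]
  rw [step1, Finset.sum_comm]
  have step2 : ∀ B ∈ u.powerset,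
      (∑ A ∈ powersetCard j u, if B ⊆ A then g B else 0)
        = (((powersetCard j u).filter (fun A => B ⊆ A)).card : ℝ) * g B := by
    intro B _
    rw [← Finset.sum_filter, Finset.sum_const, nsmul_eq_mul]
  rw [Finset.sum_congr rfl step2]
  -- now split powerset by cardinality
  rw [Finset.powerset_card_disjiUnion]; refine (Finset.sum_disjiUnion _ _ _).trans ?_
  have step3 : ∀ m ∈ Finset.range (u.card + 1),
      (∑ B ∈ powersetCard m u, (((powersetCard j u).filter (fun A => B ⊆ A)).card : ℝ) * g B)
      = (if m ≤ j then (((u.card - m).choose (j - m) : ℝ) * t^(j-m) *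
          ∑ B ∈ powersetCard m u, ∏ l ∈ B, κ l) else 0) := by
    intro m _
    by_cases hmj : m ≤ j
    · rw [if_pos hmj, Finset.mul_sum, Finset.sum_congr rfl]
      intro B hB
      rw [Finset.mem_powersetCard] at hB
      rw [card_supersets u B j hB.1 (hB.2 ▸ hmj), hg]
      simp only [hB.2]
      ring
    · rw [if_neg hmj]
      apply Finset.sum_eq_zero
      intro B hB
      rw [Finset.mem_powersetCard] at hB
      have : (powersetCard j u).filter (fun A => B ⊆ A) = ∅ := by
        apply Finset.filter_eq_empty_iff.2
        intro A hA
        rw [Finset.mem_powersetCard] at hA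
        intro hBA
        exact hmj (hB.2 ▸ (hA.2 ▸ Finset.card_le_card hBA))
      rw [this]
      simp
  rw [Finset.sum_congr rfl step3, ← Finset.sum_filter]
  have : (Finset.range (u.card + 1)).filter (fun m => m ≤ j) = Finset.range (j + 1) := by
    ext m
    simp only [Finset.mem_filter, Finset.mem_range]
    omega
  rw [this]

lemma esymmS_zero (n : ℕ) (κ : Fin n → ℝ) : esymmS n 0 κ = 1 := by
  simp [esymmS]

lemma esymmS_update_zero (n j : ℕ) (κ : Fin n → ℝ) (i : Fin n) :
    esymmS n j (Function.update κ i 0) =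
      ∑ s ∈ powersetCard j ((univ : Finset (Fin n)).erase i), ∏ l ∈ s, κ l := by
  unfold esymmS
  rw [← Finset.sum_filter_add_sum_filter_not (powersetCard j univ) (fun s => i ∈ s)]
  have h1 : ∑ s ∈ (powersetCard j (univ : Finset (Fin n))).filter (fun s => i ∈ s),
      ∏ l ∈ s, Function.update κ i 0 l = 0 := by
    apply Finset.sum_eq_zero; intro s hs
    rw [Finset.mem_filter] at hs
    exact Finset.prod_eq_zero hs.2 (by simp)
  have h2 : (powersetCard j (univ : Finset (Fin n))).filter (fun s => i ∉ s)
      = powersetCard j (univ.erase i) := by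
    ext s
    simp only [Finset.mem_filter, Finset.mem_powersetCard, Finset.subset_erase,
      Finset.subset_univ, true_and]
    tauto
  rw [h1, zero_add, h2]
  apply Finset.sum_congr rfl; intro s hs
  apply Finset.prod_congr rfl; intro l hl
  rw [Finset.mem_powersetCard] at hs
  have hli : l ≠ i := (Finset.mem_erase.1 (hs.1 hl)).1
  simp [Function.update_of_ne hli]

lemma esymmS_split (n j : ℕ) (κ : Fin n → ℝ) (i : Fin n) :
    esymmS n (j+1) κ = (∑ s ∈ powersetCard (j+1) ((univ : Finset (Fin n)).erase i), ∏ l ∈ s, κ l)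
      + κ i * ∑ s ∈ powersetCard j ((univ : Finset (Fin n)).erase i), ∏ l ∈ s, κ l := by
  set u := (univ : Finset (Fin n)).erase i with hu
  have hnotmem : i ∉ u := Finset.notMem_erase i _
  have hins : (univ : Finset (Fin n)) = insert i u := by
    rw [hu, Finset.insert_erase (Finset.mem_univ i)]
  unfold esymmS
  rw [hins, Finset.powersetCard_succ_insert hnotmem, Finset.sum_union, Finset.sum_image]
  · congr 1
    rw [Finset.mul_sum]
    apply Finset.sum_congr rfl
    intro s hs
    rw [Finset.mem_powersetCard] at hs
    have : i ∉ s := fun h => hnotmem (hs.1 h)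
    rw [Finset.prod_insert this]
  · intro s hs t ht hst
    rw [Finset.mem_coe, Finset.mem_powersetCard] at hs ht
    have hsi : i ∉ s := fun h => hnotmem (hs.1 h)
    have hti : i ∉ t := fun h => hnotmem (ht.1 h)
    have := congrArg (fun u => Finset.erase u i) hst
    simpa [Finset.erase_insert hsi, Finset.erase_insert hti] using this
  · rw [Finset.disjoint_right]
    rintro s hs hs'
    rw [Finset.mem_image] at hs
    obtain ⟨t, ht, rfl⟩ := hs
    rw [Finset.mem_powersetCard] at hs'
    exact hnotmem (hs'.1 (Finset.mem_insert_self i t))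

-- (Σ z)² = Σ z² + 2 e₂
lemma sq_sum_identity {α : Type*} [DecidableEq α] (u : Finset α) (z : α → ℝ) :
    (∑ i ∈ u, z i)^2 = (∑ i ∈ u, (z i)^2) + 2 * ∑ A ∈ powersetCard 2 u, ∏ l ∈ A, z l := by
  induction u using Finset.induction with
  | empty =>
    rw [show (powersetCard 2 (∅ : Finset α)) = ∅ from
      Finset.powersetCard_eq_empty.2 (by simp)]
    simp
  | insert _ _ ha ih =>
    rename_i a s
    rw [Finset.sum_insert ha, Finset.sum_insert ha,
      (by norm_num : (2:ℕ) = 1 + 1), Finset.powersetCard_succ_insert ha,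
      Finset.sum_union, Finset.sum_image]
    · have himg : ∑ A ∈ powersetCard 1 s, ∏ l ∈ insert a A, z l = z a * ∑ i ∈ s, z i := by
        rw [Finset.mul_sum]
        have h1 : ∀ A ∈ powersetCard 1 s, ∏ l ∈ insert a A, z l = z a * ∏ l ∈ A, z l := by
          intro A hA
          rw [Finset.mem_powersetCard] at hA
          exact Finset.prod_insert (fun h => ha (hA.1 h))
        rw [Finset.sum_congr rfl h1]
        rw [Finset.powersetCard_one]
        rw [Finset.sum_map]
        simp
      rw [himg]
      ring_nf
      ring_nf at ih
      linarith [ih]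
    · intro x hx y hy hxy
      rw [Finset.mem_coe, Finset.mem_powersetCard] at hx hy
      have hxa : a ∉ x := fun h => ha (hx.1 h)
      have hya : a ∉ y := fun h => ha (hy.1 h)
      have := congrArg (fun u => Finset.erase u a) hxy
      simpa [Finset.erase_insert hxa, Finset.erase_insert hya] using this
    · rw [Finset.disjoint_right]
      rintro A hA hA'
      rw [Finset.mem_image] at hA
      obtain ⟨B, hB, rfl⟩ := hA
      rw [Finset.mem_powersetCard] at hA'
      exact ha (hA'.1 (Finset.mem_insert_self a B))

-- reversal
lemma esymmS_reversal (D : ℕ) (y : Fin D → ℝ) (hy : ∀ i, y i ≠ 0) (m : ℕ) (hm : m ≤ D) :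
    esymmS D (D - m) y = (∏ i, y i) * esymmS D m (fun i => (y i)⁻¹) := by
  unfold esymmS
  rw [Finset.mul_sum]
  apply Finset.sum_nbij' (fun A => univ \ A) (fun B => univ \ B)
  · intro A hA
    rw [Finset.mem_powersetCard] at hA ⊢
    refine ⟨Finset.subset_univ _, ?_⟩
    rw [Finset.card_sdiff_of_subset (Finset.subset_univ A), Finset.card_univ, Fintype.card_fin, hA.2]
    omega
  · intro B hB
    rw [Finset.mem_powersetCard] at hB ⊢
    refine ⟨Finset.subset_univ _, ?_⟩
    rw [Finset.card_sdiff_of_subset (Finset.subset_univ B), Finset.card_univ, Fintype.card_fin, hB.2]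
  · intro A hA
    rw [Finset.sdiff_sdiff_self_left, Finset.inter_eq_right.2 (Finset.subset_univ A)]
  · intro B hB
    rw [Finset.sdiff_sdiff_self_left, Finset.inter_eq_right.2 (Finset.subset_univ B)]
  · intro A hA
    rw [Finset.mem_powersetCard] at hA
    have hsplit : (∏ i ∈ univ \ A, y i) * ∏ i ∈ A, y i = ∏ i, y i :=
      Finset.prod_sdiff (Finset.subset_univ A)
    have hne : (∏ i ∈ univ \ A, y i) ≠ 0 := Finset.prod_ne_zero_iff.2 (fun i _ => hy i)
    rw [Finset.prod_inv_distrib]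
    field_simp
    linarith [hsplit]

-- main finite-dim lemma
lemma finA (D : ℕ) (hD : 2 ≤ D) (y : Fin D → ℝ) (h : esymmS D (D-1) y = 0) :
    esymmS D D y * esymmS D (D-2) y ≤ 0 := by
  by_cases hzero : ∃ i, y i = 0
  · obtain ⟨i, hi⟩ := hzero
    have hcard : (Finset.univ : Finset (Fin D)).card = D := by simp
    have hps := Finset.powersetCard_self (univ : Finset (Fin D))
    rw [hcard] at hps
    have : esymmS D D y = 0 := by
      unfold esymmS
      rw [hps, Finset.sum_singleton]
      exact Finset.prod_eq_zero (Finset.mem_univ i) hi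
    rw [this, zero_mul]
  · push_neg at hzero
    set z : Fin D → ℝ := fun i => (y i)⁻¹ with hz
    have hP : (∏ i, y i) ≠ 0 := Finset.prod_ne_zero_iff.2 (fun i _ => hzero i)
    have h1 : esymmS D 1 z = 0 := by
      have h0 := esymmS_reversal D y hzero 1 (by omega)
      rw [h] at h0
      rcases mul_eq_zero.1 h0.symm with hc | hc
      · exact absurd hc hP
      · exact hc
    have hsum : ∑ i, z i = 0 := by
      have : esymmS D 1 z = ∑ i, z i := by
        unfold esymmS
        rw [Finset.powersetCard_one, Finset.sum_map]
        simp
      rw [← this, h1]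
    have h2 : esymmS D 2 z ≤ 0 := by
      have hid := sq_sum_identity (univ : Finset (Fin D)) z
      rw [hsum] at hid
      have hnn : 0 ≤ ∑ i ∈ (univ : Finset (Fin D)), (z i)^2 :=
        Finset.sum_nonneg (fun i _ => sq_nonneg _)
      unfold esymmS
      nlinarith
    have hDD : esymmS D D y = (∏ i, y i) := by
      have := esymmS_reversal D y hzero 0 (by omega)
      simp only [Nat.sub_zero] at this
      rw [this]
      have : esymmS D 0 z = 1 := by simp [esymmS]
      rw [this, mul_one]
    have hD2 : esymmS D (D-2) y = (∏ i, y i) * esymmS D 2 z := esymmS_reversal D y hzero 2 hD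
    rw [hDD, hD2]
    have : (∏ i, y i) * ((∏ i, y i) * esymmS D 2 z) = (∏ i, y i)^2 * esymmS D 2 z := by ring
    rw [this]
    exact mul_nonpos_of_nonneg_of_nonpos (sq_nonneg _) h2

-- multiset version
lemma multisetM (s : Multiset ℝ) (D : ℕ) (hD : 2 ≤ D) (hcard : Multiset.card s = D)
    (h : s.esymm (D-1) = 0) : s.esymm D * s.esymm (D-2) ≤ 0 := by
  obtain ⟨l, rfl⟩ : ∃ l : List ℝ, s = ↑l := ⟨s.toList, (Multiset.coe_toList s).symm⟩
  have hlen : l.length = D := by simpa using hcard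
  have key : ∀ m : ℕ, (l : Multiset ℝ).esymm m = esymmS l.length m l.get := by
    intro m
    have h1 : ((Finset.univ : Finset (Fin l.length)).val.map l.get : Multiset ℝ)
        = (l : Multiset ℝ) := by
      rw [Fin.univ_val_map]
      simp [List.ofFn_get]
    rw [← h1, Finset.esymm_map_val]
    rfl
  rw [key, key]
  rw [key] at h
  subst hlen
  exact finA l.length hD l.get h



lemma esymmS_shift_pos (n k : ℕ) (hkn : k ≤ n) (κ : Fin n → ℝ) (hκ : κ ∈ GardingCone n k)
    (t : ℝ) (ht : 0 ≤ t) (j : ℕ) (hj1 : 1 ≤ j) (hjk : j ≤ k) :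
    0 < esymmS n j (fun l => κ l + t) := by
  have hcard : (Finset.univ : Finset (Fin n)).card = n := by simp
  have hexp := esymmS_shift_expand (Finset.univ : Finset (Fin n)) j (by rw [hcard]; omega) κ t
  rw [hcard] at hexp
  show 0 < ∑ s ∈ Finset.powersetCard j (Finset.univ : Finset (Fin n)),
    ∏ i ∈ s, (κ i + t)
  rw [hexp]
  apply Finset.sum_pos'
  · intro m hm
    rw [Finset.mem_range] at hm
    apply mul_nonneg (mul_nonneg (by positivity) (by positivity))
    rcases Nat.eq_zero_or_pos m with h0 | h1
    · subst h0; simp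
    · exact le_of_lt (hκ m h1 (by omega))
  · refine ⟨j, Finset.self_mem_range_succ j, ?_⟩
    simp only [Nat.sub_self, pow_zero, Nat.choose_zero_right, Nat.cast_one, one_mul, mul_one]
    exact hκ j hj1 hjk

lemma eventually_pos {α : Type*} [DecidableEq α] (u : Finset α) (j : ℕ) (hj : j ≤ u.card)
    (κ : α → ℝ) :
    ∃ T : ℝ, ∀ t : ℝ, T ≤ t → 0 < ∑ A ∈ powersetCard j u, ∏ l ∈ A, (κ l + t) := by
  rcases Nat.eq_zero_or_pos j with h0 | hj1
  · subst h0
    exact ⟨0, fun t _ => by simp⟩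
  set E : ℕ → ℝ := fun m => ∑ B ∈ powersetCard m u, ∏ l ∈ B, κ l with hE
  set c : ℕ → ℝ := fun m => ((u.card - m).choose (j - m) : ℝ) with hc
  set M : ℝ := ∑ m ∈ Finset.range j, c (m+1) * |E (m+1)| with hM
  refine ⟨max 1 (M + 1), fun t ht => ?_⟩
  have ht1 : (1:ℝ) ≤ t := le_trans (le_max_left _ _) ht
  have ht0 : (0:ℝ) < t := by linarith
  have htM : M < t := by
    have := le_trans (le_max_right _ _) ht; linarith
  rw [esymmS_shift_expand u j hj κ t, Finset.sum_range_succ']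
  have key1 : -M * t^(j-1) ≤ ∑ m ∈ Finset.range j, (c (m+1) * t^(j-(m+1)) * E (m+1)) := by
    have step : ∀ m ∈ Finset.range j,
        -(c (m+1) * |E (m+1)|) * t^(j-1) ≤ c (m+1) * t^(j-(m+1)) * E (m+1) := by
      intro m hm
      have hcm : (0:ℝ) ≤ c (m+1) := by rw [hc]; positivity
      have hp : t^(j-(m+1)) ≤ t^(j-1) := pow_le_pow_right₀ ht1 (by omega)
      have hEa : -|E (m+1)| ≤ E (m+1) := neg_abs_le _
      have h1 : c (m+1) * t^(j-(m+1)) * (-|E (m+1)|) ≤ c (m+1) * t^(j-(m+1)) * E (m+1) :=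
        mul_le_mul_of_nonneg_left hEa (mul_nonneg hcm (pow_nonneg ht0.le _))
      have h2 : c (m+1) * |E (m+1)| * t^(j-(m+1)) ≤ c (m+1) * |E (m+1)| * t^(j-1) :=
        mul_le_mul_of_nonneg_left hp (mul_nonneg hcm (abs_nonneg _))
      nlinarith
    calc -M * t^(j-1) = ∑ m ∈ Finset.range j, -(c (m+1) * |E (m+1)|) * t^(j-1) := by
          rw [hM, ← Finset.sum_mul, Finset.sum_neg_distrib]
      _ ≤ _ := Finset.sum_le_sum step
  have key2 : t * t^(j-1) ≤ c 0 * t^(j-0) * E 0 := by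
    have hE0 : E 0 = 1 := by simp [hE]
    have hc0 : (1:ℝ) ≤ c 0 := by
      have h1 : 0 < (u.card - 0).choose (j - 0) := Nat.choose_pos (by omega)
      calc (1:ℝ) ≤ (((u.card - 0).choose (j - 0) : ℕ) : ℝ) := by exact_mod_cast h1
        _ = c 0 := rfl
    have htj : t^(j-0) = t * t^(j-1) := by
      rw [Nat.sub_zero, ← pow_succ']
      congr 1
      omega
    rw [hE0, mul_one, htj]
    nlinarith [mul_pos ht0 (pow_pos ht0 (j-1))]
  have hpow : (0:ℝ) < t^(j-1) := pow_pos ht0 _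
  nlinarith [mul_pos (sub_pos.2 htM) hpow]


lemma iter_card (p : ℝ[X]) (h : Multiset.card p.roots = p.natDegree) :
    ∀ m, m ≤ p.natDegree →
      Multiset.card (derivative^[m] p).roots = (derivative^[m] p).natDegree
        ∧ (derivative^[m] p).natDegree = p.natDegree - m := by
  intro m
  induction m with
  | zero => intro _; simp [h]
  | succ d ih =>
    intro hd
    obtain ⟨ih1, ih2⟩ := ih (by omega)
    set q := derivative^[d] p with hq
    have h1 : Multiset.card q.roots ≤ Multiset.card (derivative q).roots + 1 :=
      Polynomial.card_roots_le_derivative q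
    have h2 : (derivative q).natDegree ≤ q.natDegree - 1 := Polynomial.natDegree_derivative_le q
    have h3 : Multiset.card (derivative q).roots ≤ (derivative q).natDegree :=
      Polynomial.card_roots' _
    rw [Function.iterate_succ_apply', ← hq]
    constructor <;> omega
  
lemma iter_coeff (p : ℝ[X]) (m : ℕ) : ∀ r : ℕ, ∃ c : ℝ, 0 < c ∧
    (derivative^[m] p).coeff r = c * p.coeff (r + m) := by
  induction m with
  | zero => intro r; exact ⟨1, by norm_num⟩
  | succ d ih =>
    intro r
    obtain ⟨c, hc, hcoeff⟩ := ih (r + 1)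
    refine ⟨c * (r + 1), by positivity, ?_⟩
    rw [Function.iterate_succ_apply', Polynomial.coeff_derivative, hcoeff]
    have harith : r + 1 + d = r + (d + 1) := by omega
    rw [harith]
    push_cast
    ring

lemma newton_key (N : ℕ) (x : Fin N → ℝ) (j : ℕ) (hj1 : 1 ≤ j) (hjN : j + 1 ≤ N)
    (hzero : esymmS N j x = 0) : esymmS N (j-1) x * esymmS N (j+1) x ≤ 0 := by
  set P : ℝ[X] := ∏ l : Fin N, (X + C (x l)) with hP
  have hmono : P.Monic := monic_prod_of_monic _ _ (fun l _ => monic_X_add_C (x l))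
  have hPne : P ≠ 0 := hmono.ne_zero
  have hdeg : P.natDegree = N := by
    rw [hP, Polynomial.natDegree_prod]
    · simp [Polynomial.natDegree_X_add_C]
    · intro l _
      exact Polynomial.X_add_C_ne_zero (x l)
  have hsplits : P.Splits := by
    apply Polynomial.Splits.prod
    intro l _
    have : (X + C (x l)) = (X - C (-(x l))) := by rw [map_neg, sub_neg_eq_add]
    rw [this]
    exact Polynomial.Splits.X_sub_C _
  have hroots : Multiset.card P.roots = P.natDegree :=
    (Polynomial.splits_iff_card_roots).1 hsplits
  -- coefficients of P are esymmS
  have hcoeffP : ∀ m : ℕ, m ≤ N → P.coeff (N - m) = esymmS N m x := by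
    intro m hm
    have hcard : (Finset.univ : Finset (Fin N)).card = N := by simp
    have := Finset.prod_X_add_C_coeff (Finset.univ : Finset (Fin N)) x
      (k := N - m) (by rw [hcard]; omega)
    rw [hcard] at this
    rw [hP, this]
    unfold esymmS
    have harith : N - (N - m) = m := by omega
    rw [harith]
  set m₀ := N - j - 1 with hm₀
  set Q := derivative^[m₀] P with hQ
  obtain ⟨hQroots, hQdeg⟩ := iter_card P hroots m₀ (by omega)
  have hQdeg' : Q.natDegree = j + 1 := by rw [hQdeg, hdeg]; omega
  have hQne : Q ≠ 0 := by
    intro hzero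
    rw [hzero] at hQdeg'
    simp at hQdeg'
  have hQsplits : Q.Splits := Polynomial.splits_iff_card_roots.2 hQroots
  have hlc : Q.leadingCoeff ≠ 0 := Polynomial.leadingCoeff_ne_zero.2 hQne
  -- coefficient formulas
  obtain ⟨c0, hc0, hco0⟩ := iter_coeff P m₀ 0
  obtain ⟨c1, hc1, hco1⟩ := iter_coeff P m₀ 1
  obtain ⟨c2, hc2, hco2⟩ := iter_coeff P m₀ 2
  have e0 : Q.coeff 0 = c0 * esymmS N (j+1) x := by
    rw [hQ, hco0]
    congr 1
    rw [← hcoeffP (j+1) hjN]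
    congr 1
    omega
  have e1 : Q.coeff 1 = c1 * esymmS N j x := by
    rw [hQ, hco1]
    congr 1
    rw [← hcoeffP j (by omega)]
    congr 1
    omega
  have e2 : Q.coeff 2 = c2 * esymmS N (j-1) x := by
    rw [hQ, hco2]
    congr 1
    rw [← hcoeffP (j-1) (by omega)]
    congr 1
    omega
  -- Vieta for Q
  have hv : ∀ kk : ℕ, kk ≤ Q.natDegree → Q.coeff kk =
      Q.leadingCoeff * (-1)^(Q.natDegree - kk) * Q.roots.esymm (Q.natDegree - kk) :=
    fun kk hkk => Polynomial.coeff_eq_esymm_roots_of_splits hQsplits hkk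
  have hv1 := hv 1 (by omega)
  have hv0 := hv 0 (by omega)
  have hv2 := hv 2 (by omega)
  rw [hQdeg'] at hv0 hv1 hv2
  have hes1 : Q.roots.esymm j = 0 := by
    have : Q.coeff 1 = 0 := by rw [e1, hzero, mul_zero]
    rw [this] at hv1
    have h1 : (j + 1 - 1) = j := by omega
    rw [h1] at hv1
    rcases mul_eq_zero.1 hv1.symm with hc | hc
    · exact absurd (mul_eq_zero.1 hc).resolve_right (by
        intro h
        exact absurd (h (pow_ne_zero _ (by norm_num))) hlc)
    · exact hc
  -- apply multiset lemma with D = j+1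
  have hM := multisetM Q.roots (j+1) (by omega) (by rw [hQroots, hQdeg']) (by
    have : j + 1 - 1 = j := by omega
    rw [this, hes1])
  -- translate to coefficients
  have hprod : Q.coeff 0 * Q.coeff 2 ≤ 0 := by
    rw [hv0, hv2]
    have h1 : j + 1 - 0 = j + 1 := by omega
    have h2 : j + 1 - 2 = j - 1 := by omega
    rw [h1, h2]
    have hsign : ((-1:ℝ))^(j+1) * (-1)^(j-1) = 1 := by
      rw [← pow_add]
      have : j + 1 + (j - 1) = 2 * j := by omega
      rw [this, pow_mul]
      norm_num
    have hrw : Q.leadingCoeff * (-1:ℝ) ^ (j + 1) * Multiset.esymm Q.roots (j + 1) *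
        (Q.leadingCoeff * (-1) ^ (j - 1) * Multiset.esymm Q.roots (j - 1))
        = Q.leadingCoeff^2 * ((-1:ℝ)^(j+1) * (-1)^(j-1)) *
          (Multiset.esymm Q.roots (j + 1) * Multiset.esymm Q.roots (j - 1)) := by ring
    rw [hrw, hsign, mul_one]
    have := hM
    have h3 : j + 1 - 2 = j - 1 := by omega
    rw [h3] at this
    nlinarith [sq_nonneg Q.leadingCoeff, this]
  rw [e0, e2] at hprod
  nlinarith [hprod, mul_pos hc0 hc2]


/-- For `κ ∈ K_k`, the truncated vector `(κ|i)` lies in the `(k-1)`-th Gårding cone: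
`S_j(κ|i) > 0` for all `1 ≤ j ≤ k-1`. -/
theorem truncated_in_lower_cone (n k : ℕ) (hk1 : 1 ≤ k) (hkn : k ≤ n)
    (κ : Fin n → ℝ) (hκ : κ ∈ GardingCone n k) (i : Fin n) :
    ∀ j : ℕ, 1 ≤ j → j ≤ k - 1 → 0 < esymmS n j (Function.update κ i 0) := by
  have hucard : ((univ : Finset (Fin n)).erase i).card = n - 1 := by
    rw [Finset.card_erase_of_mem (Finset.mem_univ i)]
    simp
  have main : ∀ j : ℕ, j ≤ k - 1 → ∀ t : ℝ, 0 ≤ t →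
      0 < ∑ A ∈ Finset.powersetCard j ((univ : Finset (Fin n)).erase i),
        ∏ l ∈ A, (κ l + t) := by
    intro j
    induction j using Nat.strong_induction_on with
    | _ j IH =>
      intro hjk t ht
      rcases Nat.eq_zero_or_pos j with rfl | hj1
      · simp
      by_contra hneg
      push_neg at hneg
      obtain ⟨T, hT⟩ := eventually_pos ((univ : Finset (Fin n)).erase i) j
        (by rw [hucard]; omega) κ
      set T' := max T t with hT'def
      have hgT' : 0 < ∑ A ∈ Finset.powersetCard j ((univ : Finset (Fin n)).erase i),
          ∏ l ∈ A, (κ l + T') := hT T' (le_max_left _ _)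
      have hcont : ContinuousOn (fun s : ℝ =>
          ∑ A ∈ Finset.powersetCard j ((univ : Finset (Fin n)).erase i),
            ∏ l ∈ A, (κ l + s)) (Set.Icc t T') := by
        apply Continuous.continuousOn
        apply continuous_finset_sum
        intro A _
        apply continuous_finset_prod
        intro l _
        exact continuous_const.add continuous_id
      have hIcc := intermediate_value_Icc (le_max_right T t) hcont
      have h0mem : (0:ℝ) ∈ Set.Icc
          (∑ A ∈ Finset.powersetCard j ((univ : Finset (Fin n)).erase i), ∏ l ∈ A, (κ l + t))
          (∑ A ∈ Finset.powersetCard j ((univ : Finset (Fin n)).erase i), ∏ l ∈ A, (κ l + T')) :=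
        ⟨hneg, le_of_lt hgT'⟩
      obtain ⟨ts, htsmem, htseq⟩ := hIcc h0mem
      have hts0 : 0 ≤ ts := le_trans ht htsmem.1
      have htseq' : (∑ A ∈ Finset.powersetCard j ((univ : Finset (Fin n)).erase i),
          ∏ l ∈ A, (κ l + ts)) = 0 := htseq
      have hz : ∀ m : ℕ, esymmS n m (Function.update (fun l => κ l + ts) i 0)
          = ∑ A ∈ Finset.powersetCard m ((univ : Finset (Fin n)).erase i),
              ∏ l ∈ A, (κ l + ts) := by
        intro m
        have h1 := esymmS_update_zero n m (fun l => κ l + ts) i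
        simpa only [] using h1
      have hej : esymmS n j (Function.update (fun l => κ l + ts) i 0) = 0 := by
        rw [hz j]; exact htseq'
      have hsplit := esymmS_split n j (fun l => κ l + ts) i
      beta_reduce at hsplit
      rw [htseq', mul_zero, add_zero] at hsplit
      have hpos : 0 < esymmS n (j+1) (fun l => κ l + ts) :=
        esymmS_shift_pos n k hkn κ hκ ts hts0 (j+1) (by omega) (by omega)
      have hejp1 : 0 < esymmS n (j+1) (Function.update (fun l => κ l + ts) i 0) := by
        rw [hz (j+1), ← hsplit]; exact hpos
      have hejm1 : 0 < esymmS n (j-1) (Function.update (fun l => κ l + ts) i 0) := by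
        rcases Nat.eq_or_lt_of_le hj1 with h1 | h1
        · rw [← h1]
          simp [esymmS]
        · rw [hz (j-1)]
          exact IH (j-1) (by omega) (by omega) ts hts0
      have hnewton := newton_key n (Function.update (fun l => κ l + ts) i 0) j hj1 (by omega) hej
      nlinarith [mul_pos hejm1 hejp1]
  intro j hj1 hjk
  have h0 := main j hjk 0 le_rfl
  rw [esymmS_update_zero]
  simpa using h0
end

section
/- Let A be an n×n real symmetric matrix with eigenvalues λ(A), and define F(A) = S_k(λ(A)) as a polynomial in the matrix entries. If A is diagonal with diagonal entries λ = (λ_1,…,λ_n), then the first derivatives satisfy F^{ij}(A) = S_{k-1}(λ|i)·δ_{ij}. -/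
open Finset

/-- `F(A) = S_k(λ(A))`, realized as the sum of all principal `k×k` minors of `A`,
a polynomial in the entries of `A`. -/
noncomputable def Fop (n k : ℕ) (A : Matrix (Fin n) (Fin n) ℝ) : ℝ :=
  ∑ s ∈ Finset.powersetCard k (Finset.univ : Finset (Fin n)),
    (A.submatrix (fun x : {x // x ∈ s} => (x : Fin n))
      (fun x : {x // x ∈ s} => (x : Fin n))).det

/-- `F^{ij}(A) = ∂F/∂a_{ij}(A)`. -/
noncomputable def Fderiv1 (n k : ℕ) (A : Matrix (Fin n) (Fin n) ℝ) (i j : Fin n) : ℝ :=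
  deriv (fun t : ℝ => Fop n k (A + t • Matrix.single i j 1)) 0

lemma Fop_diagonal (n k : ℕ) (d : Fin n → ℝ) :
    Fop n k (Matrix.diagonal d) = esymmS n k d := by
  unfold Fop esymmS
  refine Finset.sum_congr rfl fun s _ => ?_
  rw [Matrix.submatrix_diagonal _ _ Subtype.coe_injective, Matrix.det_diagonal]
  exact Finset.prod_coe_sort s d

lemma prod_aux (i : Fin n) (t : ℝ) (lam : Fin n → ℝ) (s : Finset (Fin n)) :
    (∏ m ∈ s, (lam m + if m = i then t else 0)) =
      (∏ m ∈ s, lam m) + (if i ∈ s then t * ∏ m ∈ s.erase i, lam m else 0) := by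
  by_cases hi : i ∈ s
  · rw [if_pos hi, ← Finset.mul_prod_erase s _ hi, ← Finset.mul_prod_erase s lam hi]
    have : (∏ m ∈ s.erase i, (lam m + if m = i then t else 0)) = ∏ m ∈ s.erase i, lam m := by
      refine Finset.prod_congr rfl fun m hm => ?_
      rw [if_neg (Finset.ne_of_mem_erase hm), add_zero]
    rw [this, if_pos rfl]
    ring
  · rw [if_neg hi]
    rw [add_zero]
    refine Finset.prod_congr rfl fun m hm => ?_
    rw [if_neg (by rintro rfl; exact hi hm), add_zero]

/-- At a diagonal matrix `A` with diagonal `λ`, `F^{ij}(A) = S_{k-1}(λ|i) δ_{ij}`. -/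
theorem fderiv_esymm_diagonal (n k : ℕ) (hk1 : 1 ≤ k) (hkn : k ≤ n)
    (lam : Fin n → ℝ) (i j : Fin n) :
    Fderiv1 n k (Matrix.diagonal lam) i j =
      esymmS n (k - 1) (Function.update lam i 0) * (if i = j then 1 else 0) := by
  unfold Fderiv1
  by_cases hij : i = j
  · subst hij
    rw [if_pos rfl, mul_one]
    -- A + t • E_ii is diagonal
    have hdiag : ∀ t : ℝ, Matrix.diagonal lam + t • Matrix.single i i 1 =
        Matrix.diagonal (fun m => lam m + if m = i then t else 0) := by
      intro t
      ext a b
      by_cases hab : a = b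
      · subst hab
        by_cases hai : a = i
        · subst hai
          simp [Matrix.single]
        · simp [Matrix.single, hai, Ne.symm hai]
      · have h0 : ¬(i = a ∧ i = b) := by
          rintro ⟨rfl, h2⟩
          exact hab h2
        simp [Matrix.single, hab, Matrix.diagonal_apply_ne _ hab, h0]
    set C : ℝ := ∑ s ∈ Finset.powersetCard k (Finset.univ : Finset (Fin n)),
      (if i ∈ s then ∏ m ∈ s.erase i, lam m else 0) with hC
    have hfun : ∀ t : ℝ, Fop n k (Matrix.diagonal lam + t • Matrix.single i i 1) =
        esymmS n k lam + t * C := by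
      intro t
      rw [hdiag t, Fop_diagonal]
      unfold esymmS
      rw [hC, Finset.mul_sum, ← Finset.sum_add_distrib]
      refine Finset.sum_congr rfl fun s _ => ?_
      rw [prod_aux, mul_ite, mul_zero]
    have hderiv : HasDerivAt (fun t : ℝ =>
        Fop n k (Matrix.diagonal lam + t • Matrix.single i i 1)) C 0 := by
      have h : HasDerivAt (fun t : ℝ => esymmS n k lam + t * C) C 0 := by
        simpa using ((hasDerivAt_id (0:ℝ)).mul_const C).const_add (esymmS n k lam)
      exact h.congr_of_eventuallyEq (Filter.Eventually.of_forall hfun)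
    rw [hderiv.deriv]
    -- now show C = esymmS n (k-1) (update lam i 0)
    unfold esymmS
    have hupd : ∀ u ∈ Finset.powersetCard (k-1) (Finset.univ : Finset (Fin n)),
        (∏ m ∈ u, Function.update lam i 0 m) = if i ∉ u then ∏ m ∈ u, lam m else 0 := by
      intro u _
      by_cases hi : i ∈ u
      · rw [if_neg (by simpa using hi)]
        exact Finset.prod_eq_zero hi (by simp)
      · rw [if_pos hi]
        refine Finset.prod_congr rfl fun m hm => ?_
        rw [Function.update_of_ne (by rintro rfl; exact hi hm)]
    rw [Finset.sum_congr rfl hupd, hC, ← Finset.sum_filter, ← Finset.sum_filter]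
    refine Finset.sum_nbij' (fun s => s.erase i) (fun u => insert i u) ?_ ?_ ?_ ?_ ?_
    · intro s hs
      rw [Finset.mem_filter, Finset.mem_powersetCard_univ] at hs ⊢
      exact ⟨by rw [Finset.card_erase_of_mem hs.2, hs.1], Finset.notMem_erase i s⟩
    · intro u hu
      rw [Finset.mem_filter, Finset.mem_powersetCard_univ] at hu ⊢
      refine ⟨?_, Finset.mem_insert_self i u⟩
      rw [Finset.card_insert_of_notMem hu.2, hu.1]
      omega
    · intro s hs
      rw [Finset.mem_filter] at hs
      exact Finset.insert_erase hs.2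
    · intro u hu
      rw [Finset.mem_filter] at hu
      exact Finset.erase_insert hu.2
    · intro s _
      rfl
  · rw [if_neg hij, mul_zero]
    have hconst : ∀ t : ℝ, Fop n k (Matrix.diagonal lam + t • Matrix.single i j 1) =
        esymmS n k lam := by
      intro t
      unfold Fop esymmS
      refine Finset.sum_congr rfl fun s _ => ?_
      set M := (Matrix.diagonal lam + t • Matrix.single i j 1).submatrix
        (fun x : {x // x ∈ s} => (x : Fin n)) (fun x : {x // x ∈ s} => (x : Fin n)) with hM
      have hMentry : ∀ x y : {x // x ∈ s},
          M x y = (if (x : Fin n) = y then lam x else 0) +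
            t * (if i = (x : Fin n) ∧ j = (y : Fin n) then 1 else 0) := by
        intro x y
        simp [hM, Matrix.single, Matrix.diagonal_apply]
      have hdiag : ∀ x : {x // x ∈ s}, M x x = lam x := by
        intro x
        rw [hMentry x x, if_pos rfl, if_neg (by rintro ⟨h1, h2⟩; exact hij (h1.trans h2.symm)),
          mul_zero, add_zero]
      have hdet : M.det = ∏ x : {x // x ∈ s}, lam (x : Fin n) := by
        rcases lt_or_gt_of_ne hij with h | h
        · rw [Matrix.det_of_upperTriangular (M := M) ?_]
          · exact Finset.prod_congr rfl fun x _ => hdiag x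
          · intro x y hxy
            rw [hMentry]
            have hyx : (y : Fin n) < (x : Fin n) := hxy
            rw [if_neg (fun hcontra : (x : Fin n) = (y : Fin n) => absurd hcontra (ne_of_gt hyx)),
              if_neg (fun hcontra => by
                obtain ⟨h1, h2⟩ := hcontra
                rw [← h1, ← h2] at hyx
                exact absurd h (not_lt.2 hyx.le)), mul_zero, add_zero]
        · rw [Matrix.det_of_lowerTriangular M ?_]
          · exact Finset.prod_congr rfl fun x _ => hdiag x
          · intro x y hxy
            rw [hMentry]
            have hyx : (x : Fin n) < (y : Fin n) := hxy
            rw [if_neg (ne_of_lt hyx),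
              if_neg (fun hcontra => by
                obtain ⟨h1, h2⟩ := hcontra
                rw [← h1, ← h2] at hyx
                exact absurd h (not_lt.2 hyx.le)), mul_zero, add_zero]
      rw [hdet]
      exact Finset.prod_coe_sort s lam
    have : (fun t : ℝ => Fop n k (Matrix.diagonal lam + t • Matrix.single i j 1)) =
        fun _ => esymmS n k lam := funext hconst
    rw [this, deriv_const]
end

section
/- The second derivatives of F(A) = S_k(λ(A)) at a diagonal matrix A with diagonal λ are: F^{ii,pp} = S_{k-2}(λ|ip) for i ≠ p, F^{ip,pi} = −S_{k-2}(λ|ip) for i ≠ p, and all other second derivatives F^{ij,pq} vanish (in particular F^{ii,ii} = 0). -/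
open Finset

/-- `F^{ij,pq}(A) = ∂²F/∂a_{ij}∂a_{pq}(A)`. -/
noncomputable def Fderiv2 (n k : ℕ) (A : Matrix (Fin n) (Fin n) ℝ)
    (i j p q : Fin n) : ℝ :=
  deriv (fun s : ℝ =>
    deriv (fun t : ℝ =>
      Fop n k (A + s • Matrix.single p q 1 + t • Matrix.single i j 1)) 0) 0


open Matrix

section aux
variable {ι : Type*} [Fintype ι] [DecidableEq ι]

omit [Fintype ι] in
lemma add_smul_std (A : Matrix ι ι ℝ) (i j : ι) (t : ℝ) :
    A + t • Matrix.single i j 1 = A.updateRow i (A i + t • (Pi.single j 1 : ι → ℝ)) := by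
  ext a b
  rcases eq_or_ne a i with rfl | h
  · simp [Matrix.updateRow_self, Matrix.single, Pi.single_apply, eq_comm]
  · simp [Matrix.updateRow_ne h, Matrix.single, (Ne.symm h : i ≠ a)]

omit [Fintype ι] in
lemma updateRow_comm' (A : Matrix ι ι ℝ) {i p : ι} (h : i ≠ p) (u v : ι → ℝ) :
    (A.updateRow p u).updateRow i v = (A.updateRow i v).updateRow p u := by
  ext a b
  rcases eq_or_ne a i with rfl | ha
  · simp [Matrix.updateRow_self, Matrix.updateRow_ne h]
  · rcases eq_or_ne a p with rfl | hp
    · simp [Matrix.updateRow_self, Matrix.updateRow_ne (Ne.symm h), Matrix.updateRow_ne ha]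
    · simp [Matrix.updateRow_ne ha, Matrix.updateRow_ne hp]

omit [Fintype ι] in
lemma updateRow_updateRow (A : Matrix ι ι ℝ) (i : ι) (u v : ι → ℝ) :
    (A.updateRow i u).updateRow i v = A.updateRow i v := by
  ext a b
  rcases eq_or_ne a i with rfl | ha
  · simp
  · simp [Matrix.updateRow_ne ha]

omit [Fintype ι] in
lemma diag_updateRow_single (d : ι → ℝ) (i : ι) :
    (Matrix.diagonal d).updateRow i (Pi.single i (1:ℝ)) =
      Matrix.diagonal (Function.update d i 1) := by
  ext a b
  rcases eq_or_ne a i with rfl | ha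
  · rcases eq_or_ne a b with rfl | hb
    · simp
    · simp [Matrix.diagonal, Pi.single_apply, hb]
  · rcases eq_or_ne a b with rfl | hb
    · simp [Matrix.updateRow_ne ha, Function.update_of_ne ha]
    · simp [Matrix.updateRow_ne ha, Matrix.diagonal_apply_ne _ hb]
-- continuation: sub-lemma C
lemma det_double_update (d : ι → ℝ) {i p : ι} (hip : i ≠ p) (j q : ι) :
    (((Matrix.diagonal d).updateRow i (Pi.single j 1 : ι → ℝ)).updateRow p
        (Pi.single q 1 : ι → ℝ)).det =
      (if i = j ∧ p = q then ∏ x ∈ Finset.univ \ {i, p}, d x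
       else if i = q ∧ j = p then -∏ x ∈ Finset.univ \ {i, p}, d x else 0) := by
  by_cases h1 : i = j ∧ p = q
  · obtain ⟨rfl, rfl⟩ := h1
    have h1 : True := trivial
    rw [if_pos ⟨rfl, rfl⟩, diag_updateRow_single]
    have : ((Matrix.diagonal (Function.update d i 1)).updateRow p (Pi.single p 1 : ι → ℝ))
        = Matrix.diagonal (Function.update (Function.update d i 1) p 1) := by
      have := diag_updateRow_single (Function.update d i 1) p
      simpa using this
    rw [this, Matrix.det_diagonal]
    rw [Finset.prod_update_of_mem (Finset.mem_univ p), one_mul]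
    rw [Finset.prod_update_of_mem (by simp [hip] : i ∈ Finset.univ \ {p}), one_mul]
    congr 1
    ext x; simp [Finset.mem_sdiff, and_comm]
  · rw [if_neg h1]
    by_cases h2 : i = q ∧ j = p
    · obtain ⟨rfl, rfl⟩ := h2
      rw [if_pos ⟨rfl, rfl⟩]
      have hM : (((Matrix.diagonal d).updateRow i (Pi.single j 1 : ι → ℝ)).updateRow j
          (Pi.single i 1 : ι → ℝ)) =
          (Matrix.diagonal (Function.update (Function.update d i 1) j 1)).submatrix
            (Equiv.swap i j) id := by
        ext a b
        rcases eq_or_ne a j with rfl | hap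
        · simp [Matrix.updateRow_self, Equiv.swap_apply_right, Matrix.diagonal_apply,
            Pi.single_apply, Function.update_of_ne hip, eq_comm]
        · rcases eq_or_ne a i with rfl | hai
          · rw [Matrix.updateRow_ne hip, Matrix.updateRow_self]
            simp [Equiv.swap_apply_left, Matrix.diagonal_apply, Pi.single_apply, eq_comm]
          · rw [Matrix.updateRow_ne hap, Matrix.updateRow_ne hai]
            simp [Equiv.swap_apply_of_ne_of_ne hai hap, Matrix.diagonal_apply,
              Function.update_of_ne hap, Function.update_of_ne hai]
      rw [hM, Matrix.det_permute, Equiv.Perm.sign_swap hip, Matrix.det_diagonal]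
      rw [Finset.prod_update_of_mem (Finset.mem_univ j), one_mul]
      rw [Finset.prod_update_of_mem (by simp [hip] : i ∈ Finset.univ \ {j}), one_mul]
      have : (Finset.univ \ {j}) \ {i} = Finset.univ \ {i, j} := by
        ext x; simp [Finset.mem_sdiff, and_comm]
      rw [this]; push_cast; ring
    · rw [if_neg h2]
      push_neg at h1 h2
      by_cases hcol : j ≠ i ∧ q ≠ i
      · apply Matrix.det_eq_zero_of_column_eq_zero i
        intro a
        simp only [Matrix.updateRow_apply, Pi.single_apply, Matrix.diagonal_apply]
        split_ifs <;> simp_all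
      · have hcol2 : j ≠ p ∧ q ≠ p := by
          push_neg at hcol
          constructor
          · rintro rfl
            rcases em (j = i) with rfl | hji
            · exact hip rfl
            · exact (h2 (hcol hji).symm rfl).elim
          · rintro rfl
            rcases em (j = i) with rfl | hji
            · exact h1 rfl rfl
            · exact hip (hcol hji).symm
        apply Matrix.det_eq_zero_of_column_eq_zero p
        intro a
        simp only [Matrix.updateRow_apply, Pi.single_apply, Matrix.diagonal_apply]
        split_ifs <;> simp_all
lemma key_det (d : ι → ℝ) (p q i j : ι) :
    ∃ a b c : ℝ, ∀ s t : ℝ,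
      (Matrix.diagonal d + s • Matrix.single p q 1 +
          t • Matrix.single i j 1).det =
        a + b * s + c * t +
          (if i = j ∧ p = q ∧ i ≠ p then ∏ x ∈ Finset.univ \ {i, p}, d x
           else if i = q ∧ j = p ∧ i ≠ p then -∏ x ∈ Finset.univ \ {i, p}, d x
           else 0) * (s * t) := by
  by_cases hip : i = p
  · subst hip
    refine ⟨(Matrix.diagonal d).det,
      ((Matrix.diagonal d).updateRow i (Pi.single q 1 : ι → ℝ)).det,
      ((Matrix.diagonal d).updateRow i (Pi.single j 1 : ι → ℝ)).det, fun s t => ?_⟩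
    rw [add_smul_std (Matrix.diagonal d) i q s, add_smul_std _ i j t,
      Matrix.updateRow_self, updateRow_updateRow,
      Matrix.det_updateRow_add, Matrix.det_updateRow_add, Matrix.det_updateRow_smul,
      Matrix.det_updateRow_smul, Matrix.updateRow_eq_self]
    simp only [ne_eq, not_true_eq_false, and_false, if_false, if_neg (by tauto : ¬(i = j ∧ i = q ∧ ¬i = i))]
    ring
  · refine ⟨(Matrix.diagonal d).det,
      ((Matrix.diagonal d).updateRow p (Pi.single q 1 : ι → ℝ)).det,
      ((Matrix.diagonal d).updateRow i (Pi.single j 1 : ι → ℝ)).det, fun s t => ?_⟩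
    have hrow : ((Matrix.diagonal d + s • Matrix.single p q 1 : Matrix ι ι ℝ)) i
        = Matrix.diagonal d i := by
      rw [add_smul_std]; exact Matrix.updateRow_ne hip
    rw [add_smul_std _ i j t, hrow, Matrix.det_updateRow_add, Matrix.det_updateRow_smul,
      add_smul_std (Matrix.diagonal d) p q s, updateRow_comm' _ hip, updateRow_comm' _ hip,
      Matrix.updateRow_eq_self, Matrix.det_updateRow_add, Matrix.det_updateRow_smul,
      Matrix.det_updateRow_add, Matrix.det_updateRow_smul, Matrix.updateRow_eq_self]
    have hY : ((Matrix.diagonal d).updateRow i (Pi.single j 1 : ι → ℝ)).updateRow p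
        ((Matrix.diagonal d) p) = (Matrix.diagonal d).updateRow i (Pi.single j 1 : ι → ℝ) := by
      rw [show (Matrix.diagonal d) p
          = ((Matrix.diagonal d).updateRow i (Pi.single j 1 : ι → ℝ)) p from
          (Matrix.updateRow_ne (Ne.symm hip)).symm, Matrix.updateRow_eq_self]
    rw [hY, det_double_update d hip j q]
    have h1 : (i = j ∧ p = q ∧ i ≠ p) ↔ (i = j ∧ p = q) := by simp [hip]
    have h2 : (i = q ∧ j = p ∧ i ≠ p) ↔ (i = q ∧ j = p) := by simp [hip]
    rw [if_congr h1 rfl (if_congr h2 rfl rfl)]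
    split_ifs <;> ring

section subsetlevel
variable {n : ℕ}

lemma std_submatrix_mem (S : Finset (Fin n)) {p q : Fin n} (hp : p ∈ S) (hq : q ∈ S) :
    (Matrix.single p q (1:ℝ)).submatrix
        (fun x : {x // x ∈ S} => (x : Fin n)) (fun x : {x // x ∈ S} => (x : Fin n)) =
      Matrix.single (⟨p, hp⟩ : {x // x ∈ S}) ⟨q, hq⟩ 1 := by
  ext ⟨a, ha⟩ ⟨b, hb⟩
  simp [Matrix.single, Subtype.ext_iff]

lemma std_submatrix_not_mem (S : Finset (Fin n)) {p q : Fin n} (h : p ∉ S ∨ q ∉ S) :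
    (Matrix.single p q (1:ℝ)).submatrix
        (fun x : {x // x ∈ S} => (x : Fin n)) (fun x : {x // x ∈ S} => (x : Fin n)) = 0 := by
  ext ⟨a, ha⟩ ⟨b, hb⟩
  rcases h with h | h
  · simp [Matrix.single]
    rintro rfl; exact absurd ha h
  · simp [Matrix.single]
    rintro h' rfl; exact absurd hb h

lemma prod_subtype_sdiff (S : Finset (Fin n)) (d : Fin n → ℝ) {i p : Fin n}
    (hi : i ∈ S) (hp : p ∈ S) :
    ∏ x ∈ (Finset.univ : Finset {x // x ∈ S}) \ {⟨i, hi⟩, ⟨p, hp⟩}, d (x : Fin n) =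
      ∏ x ∈ S \ {i, p}, d x := by
  rw [show S \ {i, p} = ((Finset.univ : Finset {x // x ∈ S}) \ {⟨i, hi⟩, ⟨p, hp⟩}).map
      (Function.Embedding.subtype _) from ?_, Finset.prod_map]
  · rfl
  · ext a
    simp [Subtype.ext_iff, Finset.mem_sdiff]
    tauto

/-- the coefficient of `s*t` for a single principal minor -/
def c3val (n : ℕ) (d : Fin n → ℝ) (p q i j : Fin n) (S : Finset (Fin n)) : ℝ :=
  if i ∈ S ∧ j ∈ S ∧ p ∈ S ∧ q ∈ S then
    (if i = j ∧ p = q ∧ i ≠ p then ∏ x ∈ S \ {i, p}, d x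
     else if i = q ∧ j = p ∧ i ≠ p then -∏ x ∈ S \ {i, p}, d x
     else 0)
  else 0

lemma per_subset (d : Fin n → ℝ) (p q i j : Fin n) (S : Finset (Fin n)) :
    ∃ a b c : ℝ, ∀ s t : ℝ,
      ((Matrix.diagonal d + s • Matrix.single p q 1 +
          t • Matrix.single i j 1).submatrix
          (fun x : {x // x ∈ S} => (x : Fin n)) (fun x : {x // x ∈ S} => (x : Fin n))).det =
        a + b * s + c * t + c3val n d p q i j S * (s * t) := by
  have hdiag : (Matrix.diagonal d).submatrix
      (fun x : {x // x ∈ S} => (x : Fin n)) (fun x : {x // x ∈ S} => (x : Fin n)) =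
      Matrix.diagonal (fun x : {x // x ∈ S} => d x) :=
    Matrix.submatrix_diagonal d _ Subtype.val_injective
  have hsub : ∀ s t : ℝ, (Matrix.diagonal d + s • Matrix.single p q 1 +
      t • Matrix.single i j 1).submatrix
      (fun x : {x // x ∈ S} => (x : Fin n)) (fun x : {x // x ∈ S} => (x : Fin n)) =
      Matrix.diagonal (fun x : {x // x ∈ S} => d x) +
        s • (Matrix.single p q (1:ℝ)).submatrix
          (fun x : {x // x ∈ S} => (x : Fin n)) (fun x : {x // x ∈ S} => (x : Fin n)) +
        t • (Matrix.single i j (1:ℝ)).submatrix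
          (fun x : {x // x ∈ S} => (x : Fin n)) (fun x : {x // x ∈ S} => (x : Fin n)) := by
    intro s t; rw [← hdiag]; rfl
  by_cases hpq : p ∈ S ∧ q ∈ S
  · by_cases hij : i ∈ S ∧ j ∈ S
    · obtain ⟨a, b, c, h⟩ := key_det (fun x : {x // x ∈ S} => d x)
        ⟨p, hpq.1⟩ ⟨q, hpq.2⟩ ⟨i, hij.1⟩ ⟨j, hij.2⟩
      refine ⟨a, b, c, fun s t => ?_⟩
      rw [hsub, std_submatrix_mem S hpq.1 hpq.2, std_submatrix_mem S hij.1 hij.2, h s t]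
      have hifs : c3val n d p q i j S =
          (if (⟨i, hij.1⟩ : {x // x ∈ S}) = ⟨j, hij.2⟩ ∧ (⟨p, hpq.1⟩ : {x // x ∈ S}) = ⟨q, hpq.2⟩
              ∧ (⟨i, hij.1⟩ : {x // x ∈ S}) ≠ ⟨p, hpq.1⟩ then
            ∏ x ∈ (Finset.univ : Finset {x // x ∈ S}) \ {⟨i, hij.1⟩, ⟨p, hpq.1⟩}, d (x : Fin n)
          else if (⟨i, hij.1⟩ : {x // x ∈ S}) = ⟨q, hpq.2⟩ ∧ (⟨j, hij.2⟩ : {x // x ∈ S}) = ⟨p, hpq.1⟩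
              ∧ (⟨i, hij.1⟩ : {x // x ∈ S}) ≠ ⟨p, hpq.1⟩ then
            -∏ x ∈ (Finset.univ : Finset {x // x ∈ S}) \ {⟨i, hij.1⟩, ⟨p, hpq.1⟩}, d (x : Fin n)
          else 0) := by
        unfold c3val
        rw [if_pos ⟨hij.1, hij.2, hpq.1, hpq.2⟩]
        simp only [ne_eq, Subtype.mk.injEq, prod_subtype_sdiff S d hij.1 hpq.1]
      rw [hifs]
    · obtain ⟨a, b, c, h⟩ := key_det (fun x : {x // x ∈ S} => d x)
        ⟨p, hpq.1⟩ ⟨q, hpq.2⟩ ⟨p, hpq.1⟩ ⟨q, hpq.2⟩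
      refine ⟨a, b, 0, fun s t => ?_⟩
      rw [hsub, std_submatrix_mem S hpq.1 hpq.2,
        std_submatrix_not_mem S (by tauto), smul_zero,
        show (Matrix.diagonal (fun x : {x // x ∈ S} => d x) +
          s • Matrix.single (⟨p, hpq.1⟩ : {x // x ∈ S}) ⟨q, hpq.2⟩ (1:ℝ) + 0) =
          (Matrix.diagonal (fun x : {x // x ∈ S} => d x) +
          s • Matrix.single (⟨p, hpq.1⟩ : {x // x ∈ S}) ⟨q, hpq.2⟩ (1:ℝ) +
          (0:ℝ) • Matrix.single (⟨p, hpq.1⟩ : {x // x ∈ S}) ⟨q, hpq.2⟩ (1:ℝ)) by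
          rw [zero_smul], h s 0]
      have hc : c3val n d p q i j S = 0 := by
        unfold c3val
        have hcond : ¬(i ∈ S ∧ j ∈ S ∧ p ∈ S ∧ q ∈ S) := by tauto
        rw [if_neg hcond]
      rw [hc]
      ring
  · by_cases hij : i ∈ S ∧ j ∈ S
    · obtain ⟨a, b, c, h⟩ := key_det (fun x : {x // x ∈ S} => d x)
        ⟨i, hij.1⟩ ⟨j, hij.2⟩ ⟨i, hij.1⟩ ⟨j, hij.2⟩
      refine ⟨a, 0, c, fun s t => ?_⟩
      rw [hsub, std_submatrix_mem S hij.1 hij.2,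
        std_submatrix_not_mem S (by tauto), smul_zero,
        show (Matrix.diagonal (fun x : {x // x ∈ S} => d x) + 0 +
          t • Matrix.single (⟨i, hij.1⟩ : {x // x ∈ S}) ⟨j, hij.2⟩ (1:ℝ)) =
          (Matrix.diagonal (fun x : {x // x ∈ S} => d x) +
          (0:ℝ) • Matrix.single (⟨i, hij.1⟩ : {x // x ∈ S}) ⟨j, hij.2⟩ (1:ℝ) +
          t • Matrix.single (⟨i, hij.1⟩ : {x // x ∈ S}) ⟨j, hij.2⟩ (1:ℝ)) by
          rw [zero_smul], h 0 t]
      have hc : c3val n d p q i j S = 0 := by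
        unfold c3val
        have hcond : ¬(i ∈ S ∧ j ∈ S ∧ p ∈ S ∧ q ∈ S) := by tauto
        rw [if_neg hcond]
      rw [hc]
      ring
    · refine ⟨(Matrix.diagonal (fun x : {x // x ∈ S} => d x)).det, 0, 0, fun s t => ?_⟩
      rw [hsub, std_submatrix_not_mem S (by tauto), std_submatrix_not_mem S (by tauto),
        smul_zero, smul_zero, add_zero, add_zero]
      have hc : c3val n d p q i j S = 0 := by
        unfold c3val
        have hcond : ¬(i ∈ S ∧ j ∈ S ∧ p ∈ S ∧ q ∈ S) := by tauto
        rw [if_neg hcond]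
      rw [hc]
      ring

end subsetlevel

lemma Fop_expansion (n k : ℕ) (d : Fin n → ℝ) (p q i j : Fin n) :
    ∃ A B C : ℝ, ∀ s t : ℝ,
      Fop n k (Matrix.diagonal d + s • Matrix.single p q 1 +
          t • Matrix.single i j 1) =
        A + B * s + C * t +
          (∑ S ∈ Finset.powersetCard k (Finset.univ : Finset (Fin n)),
            c3val n d p q i j S) * (s * t) := by
  choose a b c h using fun S : Finset (Fin n) => per_subset d p q i j S
  refine ⟨∑ S ∈ Finset.powersetCard k (Finset.univ : Finset (Fin n)), a S,
    ∑ S ∈ Finset.powersetCard k (Finset.univ : Finset (Fin n)), b S,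
    ∑ S ∈ Finset.powersetCard k (Finset.univ : Finset (Fin n)), c S, fun s t => ?_⟩
  unfold Fop
  rw [Finset.sum_congr rfl (fun S _ => h S s t), Finset.sum_add_distrib,
    Finset.sum_add_distrib, Finset.sum_add_distrib, ← Finset.sum_mul, ← Finset.sum_mul,
    ← Finset.sum_mul]

lemma deriv2_poly (A B C D : ℝ) (f : ℝ → ℝ → ℝ)
    (hf : ∀ s t, f s t = A + B * s + C * t + D * (s * t)) :
    deriv (fun s => deriv (fun t => f s t) 0) 0 = D := by
  have h1 : (fun s => deriv (fun t => f s t) 0) = fun s => C + D * s := by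
    funext s
    have hft : (fun t => f s t) = fun t => (A + B * s) + (C + D * s) * t := by
      funext t; rw [hf]; ring
    rw [hft]
    have hd : HasDerivAt (fun t : ℝ => (A + B * s) + (C + D * s) * t) (C + D * s) 0 := by
      simpa using (((hasDerivAt_id (0:ℝ)).const_mul (C + D * s)).const_add (A + B * s))
    exact hd.deriv
  rw [h1]
  have hd : HasDerivAt (fun s : ℝ => C + D * s) D 0 := by
    simpa using ((hasDerivAt_id (0:ℝ)).const_mul D).const_add C
  exact hd.deriv

lemma Fderiv2_eq (n k : ℕ) (d : Fin n → ℝ) (i j p q : Fin n) :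
    Fderiv2 n k (Matrix.diagonal d) i j p q =
      ∑ S ∈ Finset.powersetCard k (Finset.univ : Finset (Fin n)), c3val n d p q i j S := by
  obtain ⟨A, B, C, h⟩ := Fop_expansion n k d p q i j
  unfold Fderiv2
  exact deriv2_poly A B C _ _ h

lemma sum_c3_main (n k : ℕ) (hk2 : 2 ≤ k) (lam : Fin n → ℝ) {i p : Fin n} (hip : i ≠ p) :
    ∑ S ∈ Finset.powersetCard k (Finset.univ : Finset (Fin n)),
      (if i ∈ S ∧ p ∈ S then ∏ x ∈ S \ {i, p}, lam x else 0) =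
      esymmS n (k - 2) (Function.update (Function.update lam i 0) p 0) := by
  unfold esymmS
  have hRHS : ∀ T ∈ Finset.powersetCard (k-2) (Finset.univ : Finset (Fin n)),
      ∏ x ∈ T, (Function.update (Function.update lam i 0) p 0) x =
      (if i ∉ T ∧ p ∉ T then ∏ x ∈ T, lam x else 0) := by
    intro T _
    by_cases h : i ∉ T ∧ p ∉ T
    · rw [if_pos h]
      refine Finset.prod_congr rfl fun x hx => ?_
      rw [Function.update_of_ne (by rintro rfl; exact h.2 hx),
        Function.update_of_ne (by rintro rfl; exact h.1 hx)]
    · rw [if_neg h]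
      rcases not_and_or.mp h with h' | h'
      · push_neg at h'
        exact Finset.prod_eq_zero h' (by
          rw [Function.update_of_ne hip, Function.update_self])
      · push_neg at h'
        exact Finset.prod_eq_zero h' (by rw [Function.update_self])
  rw [Finset.sum_congr rfl hRHS, ← Finset.sum_filter, ← Finset.sum_filter]
  refine Finset.sum_nbij' (fun S => S \ {i, p}) (fun T => insert i (insert p T))
    ?_ ?_ ?_ ?_ ?_
  · intro S hS
    simp only [Finset.mem_filter, Finset.mem_powersetCard] at hS ⊢
    obtain ⟨⟨_, hcard⟩, hiS, hpS⟩ := hS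
    refine ⟨⟨Finset.subset_univ _, ?_⟩, by simp, by simp⟩
    rw [Finset.card_sdiff_of_subset (by intro x hx; simp at hx; rcases hx with rfl | rfl <;> assumption)]
    rw [hcard, Finset.card_insert_of_notMem (by simp [hip]), Finset.card_singleton]
  · intro T hT
    simp only [Finset.mem_filter, Finset.mem_powersetCard] at hT ⊢
    obtain ⟨⟨_, hcard⟩, hiT, hpT⟩ := hT
    refine ⟨⟨Finset.subset_univ _, ?_⟩, by simp, by simp⟩
    rw [Finset.card_insert_of_notMem (by simp [hip, hiT]),
      Finset.card_insert_of_notMem hpT, hcard]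
    omega
  · intro S hS
    simp only [Finset.mem_filter, Finset.mem_powersetCard] at hS
    obtain ⟨⟨_, _⟩, hiS, hpS⟩ := hS
    ext x
    simp only [Finset.mem_insert, Finset.mem_sdiff, Finset.mem_singleton]
    constructor
    · rintro (rfl | rfl | ⟨hx, _⟩) <;> first | assumption | exact hiS | exact hpS
    · intro hx
      by_cases hxi : x = i
      · exact Or.inl hxi
      · by_cases hxp : x = p
        · exact Or.inr (Or.inl hxp)
        · exact Or.inr (Or.inr ⟨hx, by tauto⟩)
  · intro T hT
    simp only [Finset.mem_filter, Finset.mem_powersetCard] at hT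
    obtain ⟨⟨_, _⟩, hiT, hpT⟩ := hT
    ext x
    simp only [Finset.mem_sdiff, Finset.mem_insert, Finset.mem_singleton]
    constructor
    · rintro ⟨rfl | rfl | hx, hne⟩ <;> tauto
    · intro hx
      exact ⟨Or.inr (Or.inr hx), by rintro (rfl | rfl) <;> [exact hiT hx; exact hpT hx]⟩
  · intro S _
    rfl

end aux

/-- Second derivatives of `F(A) = S_k(λ(A))` at a diagonal matrix:
`F^{ii,pp} = S_{k-2}(λ|ip)` and `F^{ip,pi} = −S_{k-2}(λ|ip)` for `i ≠ p`,
and all other second derivatives vanish (in particular `F^{ii,ii} = 0`). -/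
theorem fderiv2_esymm_diagonal (n k : ℕ) (hk2 : 2 ≤ k) (hkn : k ≤ n)
    (lam : Fin n → ℝ) :
    (∀ i p : Fin n, i ≠ p →
        Fderiv2 n k (Matrix.diagonal lam) i i p p =
          esymmS n (k - 2) (Function.update (Function.update lam i 0) p 0)) ∧
      (∀ i p : Fin n, i ≠ p →
        Fderiv2 n k (Matrix.diagonal lam) i p p i =
          -esymmS n (k - 2) (Function.update (Function.update lam i 0) p 0)) ∧
      (∀ i j p q : Fin n, ¬(i = j ∧ p = q ∧ i ≠ p) → ¬(i = q ∧ j = p ∧ i ≠ p) →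
        Fderiv2 n k (Matrix.diagonal lam) i j p q = 0) := by
  refine ⟨fun i p hip => ?_, fun i p hip => ?_, fun i j p q h1 h2 => ?_⟩
  · rw [Fderiv2_eq]
    have hc : ∀ S : Finset (Fin n), c3val n lam p p i i S =
        if i ∈ S ∧ p ∈ S then ∏ x ∈ S \ {i, p}, lam x else 0 := by
      intro S
      unfold c3val
      by_cases h : i ∈ S ∧ p ∈ S
      · rw [if_pos ⟨h.1, h.1, h.2, h.2⟩, if_pos ⟨rfl, rfl, hip⟩, if_pos h]
      · rw [if_neg (fun hh => h ⟨hh.1, hh.2.2.1⟩), if_neg h]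
    rw [Finset.sum_congr rfl (fun S _ => hc S)]
    exact sum_c3_main n k hk2 lam hip
  · rw [Fderiv2_eq]
    have hc : ∀ S : Finset (Fin n), c3val n lam p i i p S =
        -(if i ∈ S ∧ p ∈ S then ∏ x ∈ S \ {i, p}, lam x else 0) := by
      intro S
      unfold c3val
      by_cases h : i ∈ S ∧ p ∈ S
      · rw [if_pos ⟨h.1, h.2, h.2, h.1⟩, if_neg (fun hh => hip hh.1), if_pos ⟨rfl, rfl, hip⟩,
          if_pos h]
      · rw [if_neg (fun hh => h ⟨hh.1, hh.2.1⟩), if_neg h, neg_zero]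
    rw [Finset.sum_congr rfl (fun S _ => hc S), Finset.sum_neg_distrib, neg_inj]
    exact sum_c3_main n k hk2 lam hip
  · rw [Fderiv2_eq]
    refine Finset.sum_eq_zero fun S _ => ?_
    unfold c3val
    rw [if_neg (fun hh => h1 hh), if_neg (fun hh => h2 hh), ite_self]
end
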